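/- arXiv:1701.03432 — 7 statements merged into one kernel-verified Lean document; each statement's English description precedes it below -/
import Mathlib

section
/- Let Φ : ℝ₊ → ℝ₊ be a bounded continuous function with Φ(1) = 1, and let (γ_n) be a sequence of positive reals with γ_n → ∞. For γ > 0 let P_γ be Poisson of parameter γ with E[Φ(P_γ/γ)] > 0, and let 𝒬_γ(Φ) be the ℕ-valued random variable with P(𝒬_γ(Φ) = k) = Φ(k/γ) P(P_γ = k) / E[Φ(P_γ/γ)]. Then for every x ≥ 0, E[x^{𝒬_{γ_n}(Φ)}] / e^{γ_n(x−1)} → Φ(x) as n → ∞. -/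
open Filter

/-- The probability mass function of the Poisson distribution of parameter `γ`:
`P(P_γ = k) = e^{-γ} γ^k / k!`. -/
noncomputable def poissonPMFreal (γ : ℝ) (k : ℕ) : ℝ :=
  Real.exp (-γ) * γ ^ k / (Nat.factorial k)


lemma tsum_pow_div_factorial (l : ℝ) : ∑' k : ℕ, l ^ k / k.factorial = Real.exp l := by
  rw [Real.exp_eq_exp_ℝ, NormedSpace.exp_eq_tsum_div]

lemma sq_le_four_pow (k : ℕ) : ((k:ℝ))^2 ≤ 4 ^ k := by
  have h : (k:ℝ) ≤ 2 ^ k := by exact_mod_cast (Nat.lt_two_pow_self (n := k)).le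
  calc ((k:ℝ))^2 ≤ (2^k)^2 := pow_le_pow_left₀ (Nat.cast_nonneg k) h 2
    _ = 4 ^ k := by rw [← pow_mul, mul_comm, pow_mul]; norm_num

lemma summable_sq {l : ℝ} (hl : 0 ≤ l) :
    Summable (fun k : ℕ => (k:ℝ)^2 * l^k / k.factorial) := by
  apply Summable.of_nonneg_of_le (fun k => by positivity) (fun k => ?_)
    (Real.summable_pow_div_factorial (4*l))
  rw [mul_pow]
  gcongr
  exact sq_le_four_pow k

lemma summable_id {l : ℝ} (hl : 0 ≤ l) :
    Summable (fun k : ℕ => (k:ℝ) * l^k / k.factorial) := by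
  apply Summable.of_nonneg_of_le (fun k => by positivity) (fun k => ?_) (summable_sq hl)
  gcongr ?_ * _ / _
  exact_mod_cast Nat.le_self_pow two_ne_zero k

lemma tsum_id {l : ℝ} (hl : 0 ≤ l) :
    ∑' k : ℕ, (k:ℝ) * l^k / k.factorial = l * Real.exp l := by
  rw [Summable.tsum_eq_zero_add (summable_id hl)]
  simp only [Nat.cast_zero, zero_mul, zero_div, zero_add]
  have h : ∀ k : ℕ, ((k:ℕ)+1 : ℝ) * l^(k+1) / (k+1).factorial = l * (l^k / k.factorial) := by
    intro k
    rw [Nat.factorial_succ]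
    push_cast
    have hk : (k.factorial : ℝ) ≠ 0 := Nat.cast_ne_zero.mpr k.factorial_ne_zero
    field_simp
    ring
  rw [tsum_congr (fun k => by push_cast; rw [h k]), tsum_mul_left, tsum_pow_div_factorial]

lemma summable_kk {l : ℝ} (hl : 0 ≤ l) :
    Summable (fun k : ℕ => (k:ℝ) * ((k:ℝ)-1) * l^k / k.factorial) := by
  apply Summable.of_nonneg_of_le (fun k => ?_) (fun k => ?_) (summable_sq hl)
  · apply div_nonneg _ (by positivity)
    apply mul_nonneg _ (by positivity)
    rcases Nat.eq_zero_or_pos k with h | h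
    · simp [h]
    · have : (1:ℝ) ≤ (k:ℝ) := by exact_mod_cast h
      nlinarith
  · gcongr ?_ * _ / _
    nlinarith [Nat.cast_nonneg (α := ℝ) k]

lemma tsum_kk {l : ℝ} (hl : 0 ≤ l) :
    ∑' k : ℕ, (k:ℝ) * ((k:ℝ)-1) * l^k / k.factorial = l^2 * Real.exp l := by
  rw [Summable.tsum_eq_zero_add (summable_kk hl)]
  simp only [Nat.cast_zero, zero_mul, zero_div, zero_add]
  rw [Summable.tsum_eq_zero_add (((summable_nat_add_iff 1).mpr (summable_kk hl)))]
  have h0 : ((0:ℕ)+1:ℕ) = 1 := rfl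
  norm_num
  have h : ∀ k : ℕ, ((k:ℝ)+1+1) * ((k:ℝ)+1) * l^(k+1+1) / ((k+1+1).factorial : ℝ)
      = l^2 * (l^k / k.factorial) := by
    intro k
    have h2 : (k+1+1).factorial = (k+2) * ((k+1) * k.factorial) := by
      rw [Nat.factorial_succ, Nat.factorial_succ]
    rw [h2]
    have hk : (k.factorial : ℝ) ≠ 0 := Nat.cast_ne_zero.mpr k.factorial_ne_zero
    push_cast
    field_simp
    ring
  rw [tsum_congr h, tsum_mul_left, tsum_pow_div_factorial]

lemma poisson_decomp (l : ℝ) (k : ℕ) : poissonPMFreal l k * ((k:ℝ) - l)^2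
    = Real.exp (-l) * ((k:ℝ) * ((k:ℝ)-1) * l^k / k.factorial)
      + (1-2*l) * (Real.exp (-l) * ((k:ℝ) * l^k / k.factorial))
      + l^2 * (Real.exp (-l) * (l^k / k.factorial)) := by
  have hk : (k.factorial : ℝ) ≠ 0 := Nat.cast_ne_zero.mpr k.factorial_ne_zero
  unfold poissonPMFreal
  field_simp
  ring

lemma summable_poisson {l : ℝ} (hl : 0 ≤ l) : Summable (poissonPMFreal l) := by
  have : poissonPMFreal l = fun k : ℕ => Real.exp (-l) * (l^k / k.factorial) := by
    funext k; unfold poissonPMFreal; ring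
  rw [this]
  exact (Real.summable_pow_div_factorial l).mul_left _

lemma tsum_poisson {l : ℝ} (hl : 0 ≤ l) : ∑' k : ℕ, poissonPMFreal l k = 1 := by
  have : ∀ k : ℕ, poissonPMFreal l k = Real.exp (-l) * (l^k / k.factorial) := by
    intro k; unfold poissonPMFreal; ring
  rw [tsum_congr this, tsum_mul_left, tsum_pow_div_factorial, ← Real.exp_add]
  simp

lemma summable_poisson_sq {l : ℝ} (hl : 0 ≤ l) :
    Summable (fun k : ℕ => poissonPMFreal l k * ((k:ℝ) - l)^2) := by
  simp only [poisson_decomp]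
  exact (((summable_kk hl).mul_left _).add (((summable_id hl).mul_left _).mul_left _)).add
    (((Real.summable_pow_div_factorial l).mul_left _).mul_left _)

lemma tsum_poisson_sq {l : ℝ} (hl : 0 ≤ l) :
    ∑' k : ℕ, poissonPMFreal l k * ((k:ℝ) - l)^2 = l := by
  simp only [poisson_decomp]
  rw [Summable.tsum_add (((summable_kk hl).mul_left _).add (((summable_id hl).mul_left _).mul_left _))
      (((Real.summable_pow_div_factorial l).mul_left _).mul_left _),
    Summable.tsum_add ((summable_kk hl).mul_left _) (((summable_id hl).mul_left _).mul_left _),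
    tsum_mul_left, tsum_mul_left, tsum_mul_left, tsum_mul_left, tsum_mul_left,
    tsum_kk hl, tsum_id hl, tsum_pow_div_factorial, Real.exp_neg]
  have hE : Real.exp l ≠ 0 := (Real.exp_pos l).ne'
  field_simp
  ring

lemma poisson_nonneg {l : ℝ} (hl : 0 ≤ l) (k : ℕ) : 0 ≤ poissonPMFreal l k :=
  div_nonneg (mul_nonneg (Real.exp_pos _).le (pow_nonneg hl k)) (Nat.cast_nonneg _)

lemma key_tendsto (Φ : ℝ → ℝ)
    (hΦcont : ContinuousOn Φ (Set.Ici 0))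
    (hΦbdd : ∃ M : ℝ, ∀ x : ℝ, 0 ≤ x → |Φ x| ≤ M)
    (γ : ℕ → ℝ) (hγpos : ∀ n, 0 < γ n) (hγtop : Tendsto γ atTop atTop)
    (x : ℝ) (hx : 0 ≤ x) :
    Tendsto (fun n => ∑' k : ℕ, poissonPMFreal (γ n * x) k * Φ ((k:ℝ) / γ n))
      atTop (nhds (Φ x)) := by
  obtain ⟨M, hM⟩ := hΦbdd
  have hM0 : 0 ≤ M := (abs_nonneg _).trans (hM 0 le_rfl)
  rw [Metric.tendsto_atTop]
  intro ε hε
  obtain ⟨δ, hδpos, hδ⟩ := (Metric.continuousWithinAt_iff).mp (hΦcont x (Set.mem_Ici.mpr hx))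
    (ε/2) (by linarith)
  set c : ℝ := 2*M/δ^2 with hc
  have hc0 : 0 ≤ c := by positivity
  -- pointwise bound on |Φ y - Φ x|
  have hd : ∀ y : ℝ, 0 ≤ y → |Φ y - Φ x| ≤ ε/2 + c * (y - x)^2 := by
    intro y hy
    rcases lt_or_ge (dist y x) δ with h | h
    · have h1 := hδ (Set.mem_Ici.mpr hy) h
      rw [Real.dist_eq] at h1
      have h2 : 0 ≤ c * (y-x)^2 := by positivity
      linarith
    · have h1 : |Φ y - Φ x| ≤ 2*M := by
        calc |Φ y - Φ x| ≤ |Φ y| + |Φ x| := abs_sub _ _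
          _ ≤ M + M := add_le_add (hM y hy) (hM x hx)
          _ = 2*M := by ring
      have h2 : δ^2 ≤ (y-x)^2 := by
        rw [Real.dist_eq] at h
        calc δ^2 ≤ |y-x|^2 := pow_le_pow_left₀ hδpos.le h 2
          _ = (y-x)^2 := sq_abs _
      have h3 : 2*M ≤ c * (y-x)^2 := by
        calc 2*M = 2*M/δ^2 * δ^2 := by field_simp
          _ ≤ c * (y-x)^2 := by rw [hc]; gcongr
      linarith
  -- eventually c*x/γ n < ε/2
  have htend : Tendsto (fun n => c*x / γ n) atTop (nhds 0) :=
    Tendsto.div_atTop tendsto_const_nhds hγtop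
  rw [Metric.tendsto_atTop] at htend
  obtain ⟨N, hN⟩ := htend (ε/2) (by linarith)
  refine ⟨N, fun n hn => ?_⟩
  have hγn := hγpos n
  set l : ℝ := γ n * x with hldef
  have hl : 0 ≤ l := by positivity
  -- summabilities
  have hsΦ : Summable (fun k : ℕ => poissonPMFreal l k * Φ ((k:ℝ) / γ n)) := by
    apply Summable.of_norm
    apply Summable.of_nonneg_of_le (fun k => norm_nonneg _) (fun k => ?_)
      ((summable_poisson hl).mul_right M)
    rw [norm_mul, Real.norm_eq_abs, Real.norm_eq_abs, abs_of_nonneg (poisson_nonneg hl k)]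
    exact mul_le_mul_of_nonneg_left (hM _ (by positivity)) (poisson_nonneg hl k)
  have hsh : Summable (fun k : ℕ =>
      ε/2 * poissonPMFreal l k + c/(γ n)^2 * (poissonPMFreal l k * ((k:ℝ) - l)^2)) :=
    ((summable_poisson hl).mul_left _).add ((summable_poisson_sq hl).mul_left _)
  have hgb : ∀ k : ℕ, ‖poissonPMFreal l k * (Φ ((k:ℝ)/γ n) - Φ x)‖ ≤
      ε/2 * poissonPMFreal l k + c/(γ n)^2 * (poissonPMFreal l k * ((k:ℝ) - l)^2) := by
    intro k
    rw [norm_mul, Real.norm_eq_abs, Real.norm_eq_abs, abs_of_nonneg (poisson_nonneg hl k)]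
    have hy : (0:ℝ) ≤ (k:ℝ)/γ n := by positivity
    have hb := hd _ hy
    have hsq : ((k:ℝ)/γ n - x)^2 = ((k:ℝ) - l)^2 / (γ n)^2 := by
      rw [hldef]; field_simp; try ring
    calc poissonPMFreal l k * |Φ ((k:ℝ)/γ n) - Φ x|
        ≤ poissonPMFreal l k * (ε/2 + c * (((k:ℝ)/γ n - x)^2)) :=
          mul_le_mul_of_nonneg_left hb (poisson_nonneg hl k)
      _ = ε/2 * poissonPMFreal l k + c/(γ n)^2 * (poissonPMFreal l k * ((k:ℝ) - l)^2) := by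
          rw [hsq]; field_simp
  have hsg : Summable (fun k : ℕ => ‖poissonPMFreal l k * (Φ ((k:ℝ)/γ n) - Φ x)‖) :=
    Summable.of_nonneg_of_le (fun k => norm_nonneg _) hgb hsh
  -- identify the difference
  have hdiff : (∑' k : ℕ, poissonPMFreal l k * Φ ((k:ℝ) / γ n)) - Φ x
      = ∑' k : ℕ, poissonPMFreal l k * (Φ ((k:ℝ)/γ n) - Φ x) := by
    rw [tsum_congr (fun k : ℕ => mul_sub (poissonPMFreal l k) (Φ ((k:ℝ)/γ n)) (Φ x)),
      Summable.tsum_sub hsΦ ((summable_poisson hl).mul_right _), tsum_mul_right, tsum_poisson hl,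
      one_mul]
  rw [Real.dist_eq, hdiff]
  calc |∑' k : ℕ, poissonPMFreal l k * (Φ ((k:ℝ)/γ n) - Φ x)|
      ≤ ∑' k : ℕ, ‖poissonPMFreal l k * (Φ ((k:ℝ)/γ n) - Φ x)‖ := by
        exact norm_tsum_le_tsum_norm hsg
    _ ≤ ∑' k : ℕ, (ε/2 * poissonPMFreal l k + c/(γ n)^2 * (poissonPMFreal l k * ((k:ℝ) - l)^2)) :=
        Summable.tsum_le_tsum hgb hsg hsh
    _ = ε/2 * 1 + c/(γ n)^2 * l := by
        rw [Summable.tsum_add ((summable_poisson hl).mul_left _) ((summable_poisson_sq hl).mul_left _),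
          tsum_mul_left, tsum_mul_left, tsum_poisson hl, tsum_poisson_sq hl]
    _ = ε/2 + c*x/γ n := by rw [hldef]; field_simp; try ring
    _ < ε/2 + ε/2 := by
        have := hN n hn
        rw [Real.dist_eq, sub_zero] at this
        have h2 : c*x/γ n ≤ |c*x/γ n| := le_abs_self _
        linarith
    _ = ε := by ring

/-- Let `Φ : ℝ₊ → ℝ₊` be bounded and continuous with `Φ(1) = 1`, and let `γ_n → ∞` be positive.
Let `𝒬_{γ_n}(Φ)` be the penalisation of a Poisson random variable `P_{γ_n}` by the weight
`Φ(P_{γ_n}/γ_n)`, i.e. `P(𝒬_γ(Φ) = k) = Φ(k/γ) P(P_γ = k) / E[Φ(P_γ/γ)]`.  Then for all `x ≥ 0`,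
`E[x^{𝒬_{γ_n}(Φ)}] / e^{γ_n (x-1)} → Φ(x)` (mod-Poisson convergence to `Φ`).  Here
`E[x^{𝒬_γ(Φ)}] = (∑_k Φ(k/γ) P(P_γ = k) x^k) / E[Φ(P_γ/γ)]` and `E[x^{P_γ}] = e^{γ(x-1)}`. -/
theorem penalised_poisson_mod_poisson (Φ : ℝ → ℝ)
    (hΦcont : ContinuousOn Φ (Set.Ici 0))
    (hΦbdd : ∃ M : ℝ, ∀ x : ℝ, 0 ≤ x → |Φ x| ≤ M)
    (hΦnonneg : ∀ x : ℝ, 0 ≤ x → 0 ≤ Φ x)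
    (hΦone : Φ 1 = 1)
    (γ : ℕ → ℝ) (hγpos : ∀ n, 0 < γ n) (hγtop : Tendsto γ atTop atTop)
    (hdenpos : ∀ n, 0 < ∑' k : ℕ, poissonPMFreal (γ n) k * Φ (k / γ n)) :
    ∀ x : ℝ, 0 ≤ x →
      Tendsto (fun n =>
          (∑' k : ℕ, poissonPMFreal (γ n) k * Φ (k / γ n) * x ^ k) /
            ((∑' k : ℕ, poissonPMFreal (γ n) k * Φ (k / γ n)) * Real.exp (γ n * (x - 1))))
        atTop (nhds (Φ x)) := by
  intro x hx
  have h1 := key_tendsto Φ hΦcont hΦbdd γ hγpos hγtop x hx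
  have h2 := key_tendsto Φ hΦcont hΦbdd γ hγpos hγtop 1 zero_le_one
  have h3 : Tendsto (fun n => (∑' k : ℕ, poissonPMFreal (γ n * x) k * Φ ((k:ℝ)/γ n)) /
      (∑' k : ℕ, poissonPMFreal (γ n * 1) k * Φ ((k:ℝ)/γ n))) atTop (nhds (Φ x)) := by
    have h4 := h1.div h2 (by rw [hΦone]; exact one_ne_zero)
    rw [hΦone, div_one] at h4
    exact h4
  apply h3.congr
  intro n
  have hE : Real.exp (γ n * (x-1)) ≠ 0 := (Real.exp_pos _).ne'
  have hpt : ∀ k : ℕ, poissonPMFreal (γ n) k * Φ ((k:ℝ)/γ n) * x^k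
      = Real.exp (γ n * (x-1)) * (poissonPMFreal (γ n * x) k * Φ ((k:ℝ)/γ n)) := by
    intro k
    have hexp : Real.exp (-(γ n * x)) = Real.exp (-γ n) / Real.exp (γ n * (x-1)) := by
      rw [eq_div_iff hE, ← Real.exp_add]; ring_nf
    unfold poissonPMFreal
    rw [hexp, mul_pow]
    have hk : (k.factorial : ℝ) ≠ 0 := Nat.cast_ne_zero.mpr k.factorial_ne_zero
    field_simp
  have hnum : (∑' k : ℕ, poissonPMFreal (γ n) k * Φ ((k:ℝ)/γ n) * x^k)
      = Real.exp (γ n * (x-1)) * ∑' k : ℕ, poissonPMFreal (γ n * x) k * Φ ((k:ℝ)/γ n) := by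
    rw [tsum_congr hpt, tsum_mul_left]
  have hden : (∑' k : ℕ, poissonPMFreal (γ n * 1) k * Φ ((k:ℝ)/γ n))
      = ∑' k : ℕ, poissonPMFreal (γ n) k * Φ ((k:ℝ)/γ n) := by rw [mul_one]
  rw [hden, hnum, mul_comm (∑' k : ℕ, poissonPMFreal (γ n) k * Φ ((k:ℝ)/γ n))
    (Real.exp (γ n * (x-1))), mul_div_mul_left _ _ hE]
end

section
/- Let (p_k)_{k ≥ 1} be a sequence in [0,1] with Σ_{k≥1} p_k = +∞ and Σ_{k≥1} p_k² < +∞, and let (B_k)_{k≥1} be independent Bernoulli random variables with P(B_k = 1) = p_k = 1 − P(B_k = 0). Set Z_n := Σ_{k=1}^n B_k and γ_n := Σ_{k=1}^n p_k. Then for every x ≥ 0, the infinite product Φ(x) := ∏_{k≥1} (1 + p_k(x−1)) e^{−p_k(x−1)} converges, and E[x^{Z_n}] / e^{γ_n(x−1)} → Φ(x) as n → ∞. -/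
open MeasureTheory ProbabilityTheory Filter

/-- Let `(p_k)` be a sequence in `[0,1]` with `∑ p_k = ∞` and `∑ p_k² < ∞`, and `(B_k)`
independent Bernoulli random variables with `P(B_k = 1) = p_k`.  Set `Z_n := ∑_{k<n} B_k` and
`γ_n := ∑_{k<n} p_k`.  For every `x ≥ 0` the infinite product
`Φ(x) = ∏_k (1 + p_k(x-1)) e^{-p_k(x-1)}` converges and
`E[x^{Z_n}] / e^{γ_n(x-1)} → Φ(x)` (mod-Poisson convergence at speed `γ_n`). -/
theorem mod_poisson_bernoulli_sum
    {Ω : Type*} [MeasureSpace Ω] [IsProbabilityMeasure (ℙ : Measure Ω)]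
    (p : ℕ → ℝ) (hp : ∀ k, p k ∈ Set.Icc (0 : ℝ) 1)
    (hdiv : Tendsto (fun n => ∑ k ∈ Finset.range n, p k) atTop atTop)
    (hsq : Summable fun k => (p k) ^ 2)
    (B : ℕ → Ω → ℕ) (hmeas : ∀ k, Measurable (B k))
    (hval : ∀ k ω, B k ω ≤ 1)
    (hdist : ∀ k, ℙ {ω | B k ω = 1} = ENNReal.ofReal (p k))
    (hindep : iIndepFun B ℙ) :
    ∀ x : ℝ, 0 ≤ x →
      Multipliable (fun k => (1 + p k * (x - 1)) * Real.exp (-(p k * (x - 1)))) ∧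
      Tendsto (fun n =>
          (∫ ω, x ^ (∑ k ∈ Finset.range n, B k ω) ∂ℙ) /
            Real.exp ((∑ k ∈ Finset.range n, p k) * (x - 1)))
        atTop (nhds (∏' k : ℕ, (1 + p k * (x - 1)) * Real.exp (-(p k * (x - 1))))) := by
  intro x hx
  set g : ℕ → ℝ := fun k => (1 + p k * (x - 1)) * Real.exp (-(p k * (x - 1))) with hg
  have hp0 : ∀ k, 0 ≤ p k := fun k => (hp k).1
  have hp1 : ∀ k, p k ≤ 1 := fun k => (hp k).2
  have hfac_nonneg : ∀ k, 0 ≤ 1 + p k * (x - 1) := by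
    intro k; nlinarith [hp0 k, hp1 k, hx]
  -- measurability of x ^ B k
  have hBmeas : ∀ k, Measurable fun ω => (x : ℝ) ^ (B k ω) :=
    fun k => measurable_from_top.comp (hmeas k)
  -- single integral
  have hsingle : ∀ k, ∫ ω, (x : ℝ) ^ (B k ω) ∂ℙ = 1 + p k * (x - 1) := by
    intro k
    have hset : MeasurableSet {ω | B k ω = 1} := (hmeas k) (measurableSet_singleton 1)
    have heq : ∀ ω, (x : ℝ) ^ (B k ω) =
        1 + (x - 1) * Set.indicator {ω | B k ω = 1} (1 : Ω → ℝ) ω := by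
      intro ω
      rcases Nat.le_one_iff_eq_zero_or_eq_one.mp (hval k ω) with h | h
      · have : ω ∉ {ω | B k ω = 1} := by simp [h]
        simp [h, Set.indicator_of_notMem this]
      · have : ω ∈ {ω | B k ω = 1} := h
        simp [h, Set.indicator_of_mem this]
    have hint : Integrable (Set.indicator {ω | B k ω = 1} (1 : Ω → ℝ)) ℙ :=
      (integrable_const (1 : ℝ)).indicator hset
    rw [integral_congr_ae (Filter.Eventually.of_forall heq),
      integral_add (integrable_const 1) (hint.const_mul _), integral_const,
      integral_const_mul, integral_indicator_one hset, measureReal_def ℙ {ω | B k ω = 1}, hdist k,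
      ENNReal.toReal_ofReal (hp0 k)]
    simp [measure_univ, mul_comm]
  -- key integral identity
  have key : ∀ n, ∫ ω, (x : ℝ) ^ (∑ k ∈ Finset.range n, B k ω) ∂ℙ
      = ∏ k ∈ Finset.range n, (1 + p k * (x - 1)) := by
    intro n
    induction n with
    | zero => simp
    | succ n ih =>
      have hZmeas : Measurable fun ω => ∑ k ∈ Finset.range n, B k ω :=
        Finset.measurable_sum _ fun k _ => hmeas k
      have hindep' : IndepFun (fun ω => ∑ k ∈ Finset.range n, B k ω) (B n) ℙ := by
        have h := hindep.indepFun_sum_range_succ hmeas n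
        rwa [show (∑ j ∈ Finset.range n, B j) = (fun ω => ∑ j ∈ Finset.range n, B j ω)
          from funext fun ω => Finset.sum_apply ω (Finset.range n) B] at h
      have hindep2 : IndepFun (fun ω => (x : ℝ) ^ (∑ k ∈ Finset.range n, B k ω))
          (fun ω => (x : ℝ) ^ (B n ω)) ℙ :=
        hindep'.comp measurable_from_top measurable_from_top
      have hmul := IndepFun.integral_fun_mul_eq_mul_integral hindep2
        ((measurable_from_top.comp hZmeas).aestronglyMeasurable)
        ((hBmeas n).aestronglyMeasurable)
      calc ∫ ω, (x : ℝ) ^ (∑ k ∈ Finset.range (n + 1), B k ω) ∂ℙ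
          = ∫ ω, (x : ℝ) ^ (∑ k ∈ Finset.range n, B k ω) * (x : ℝ) ^ (B n ω) ∂ℙ := by
            apply integral_congr_ae
            filter_upwards with ω
            rw [Finset.sum_range_succ, pow_add]
        _ = (∫ ω, (x : ℝ) ^ (∑ k ∈ Finset.range n, B k ω) ∂ℙ) *
              ∫ ω, (x : ℝ) ^ (B n ω) ∂ℙ := hmul
        _ = ∏ k ∈ Finset.range (n + 1), (1 + p k * (x - 1)) := by
            rw [ih, hsingle n, Finset.prod_range_succ]
  -- ratio equals partial product of g
  have hratio : ∀ n,
      (∫ ω, (x : ℝ) ^ (∑ k ∈ Finset.range n, B k ω) ∂ℙ) /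
        Real.exp ((∑ k ∈ Finset.range n, p k) * (x - 1)) = ∏ k ∈ Finset.range n, g k := by
    intro n
    rw [key n, Finset.sum_mul, Real.exp_sum, ← Finset.prod_div_distrib]
    exact Finset.prod_congr rfl fun k _ => by
      rw [div_eq_mul_inv, ← Real.exp_neg]
  -- HasProd
  obtain ⟨L, hL⟩ : ∃ L, HasProd g L := by
    by_cases hzero : ∃ k, 1 + p k * (x - 1) = 0
    · obtain ⟨k0, hk0⟩ := hzero
      have hg0 : g k0 = 0 := by simp [hg, hk0]
      refine ⟨0, ?_⟩
      have hev : ∀ᶠ s in atTop, ∏ i ∈ s, g i = 0 := by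
        filter_upwards [eventually_ge_atTop ({k0} : Finset ℕ)] with s hs
        exact Finset.prod_eq_zero (hs (Finset.mem_singleton_self k0)) hg0
      exact Tendsto.congr' (hev.mono fun s h => h.symm) tendsto_const_nhds
    · push_neg at hzero
      have hfpos : ∀ k, 0 < 1 + p k * (x - 1) :=
        fun k => lt_of_le_of_ne (hfac_nonneg k) (Ne.symm (hzero k))
      have hgp : ∀ k, 0 < g k :=
        fun k => mul_pos (hfpos k) (Real.exp_pos _)
      have hlogg : ∀ k, Real.log (g k) =
          Real.log (1 + p k * (x - 1)) - p k * (x - 1) := by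
        intro k
        rw [Real.log_mul (ne_of_gt (hfpos k)) (Real.exp_ne_zero _), Real.log_exp]
        ring
      -- p tends to 0
      have hpt : Tendsto p atTop (nhds 0) := by
        have h1 : Tendsto (fun k => Real.sqrt ((p k) ^ 2)) atTop (nhds 0) := by
          simpa using (hsq.tendsto_atTop_zero).sqrt
        refine h1.congr fun k => Real.sqrt_sq (hp0 k)
      obtain ⟨N, hN⟩ : ∃ N, ∀ k ≥ N, |p k * (x - 1)| ≤ 1 / 2 := by
        have h2 : Tendsto (fun k => p k * (x - 1)) atTop (nhds 0) := by
          simpa using hpt.mul_const (x - 1)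
        obtain ⟨N, hN⟩ := Metric.tendsto_atTop.mp h2 (1 / 2) (by norm_num)
        refine ⟨N, fun k hk => ?_⟩
        have h3 := hN k hk
        rw [Real.dist_eq, sub_zero] at h3
        linarith
      have hsummable : Summable fun k => Real.log (g k) := by
        rw [← summable_nat_add_iff N]
        have hb : Summable fun k => 2 * (x - 1) ^ 2 * (p (k + N)) ^ 2 :=
          ((summable_nat_add_iff N).2 hsq).mul_left _
        refine Summable.of_abs (hb.of_nonneg_of_le (fun _ => abs_nonneg _) fun k => ?_)
        set t := p (k + N) * (x - 1) with hT
        have h12 : 1 / 2 ≤ 1 + t := by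
          have := hN (k + N) (Nat.le_add_left N k)
          rw [← hT] at this
          cases abs_le.mp this with
          | intro h1 h2 => linarith
        have hpos : (0 : ℝ) < 1 + t := by linarith
        have hub : Real.log (1 + t) - t ≤ 0 := by
          have := Real.log_le_sub_one_of_pos hpos; linarith
        have hlb : -(2 * t ^ 2) ≤ Real.log (1 + t) - t := by
          have h3 : 1 - (1 + t)⁻¹ ≤ Real.log (1 + t) := Real.one_sub_inv_le_log_of_pos hpos
          have h4 : t / (1 + t) - t ≤ Real.log (1 + t) - t := by
            have : 1 - (1 + t)⁻¹ = t / (1 + t) := by field_simp; ring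
            linarith [this ▸ h3]
          have h5 : -(2 * t ^ 2) ≤ t / (1 + t) - t := by
            rw [div_sub' (ne_of_gt hpos), le_div_iff₀ hpos]
            nlinarith [sq_nonneg t, mul_nonneg (sq_nonneg t) (by linarith : (0:ℝ) ≤ 1 + 2 * t)]
          linarith
        rw [hlogg (k + N), ← hT]
        have habs : |Real.log (1 + t) - t| ≤ 2 * t ^ 2 := abs_le.mpr ⟨hlb, by linarith⟩
        calc |Real.log (1 + t) - t| ≤ 2 * t ^ 2 := habs
          _ = 2 * (x - 1) ^ 2 * (p (k + N)) ^ 2 := by rw [hT]; ring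
      refine ⟨Real.exp (∑' k, Real.log (g k)), ?_⟩
      have h1 : HasProd (fun k => Real.exp (Real.log (g k)))
          (Real.exp (∑' k, Real.log (g k))) := hsummable.hasSum.rexp
      have heq : (fun k => Real.exp (Real.log (g k))) = g :=
        funext fun k => Real.exp_log (hgp k)
      rwa [heq] at h1
  refine ⟨⟨L, hL⟩, ?_⟩
  rw [hL.tprod_eq]
  exact hL.tendsto_prod_nat.congr fun n => (hratio n).symm
end

section
/- For k ≥ 1 define φ_k(x) := ∏_{ℓ=1}^k (1 + (x−1)/ℓ) e^{−(x−1)/ℓ} for x ≥ 0. Then for every k ≥ 1 and every x ≥ 0, |φ_k'(x)| ≤ e; in particular sup_{x ∈ ℝ₊} |φ_k'(x)| = O(1) as k → ∞. -/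
/-- The `k`-th partial product `φ_k(x) = ∏_{ℓ=1}^k (1 + (x-1)/ℓ) e^{-(x-1)/ℓ}` of `Φ_C`. -/
noncomputable def phiCpartial (k : ℕ) (x : ℝ) : ℝ :=
  ∏ ℓ ∈ Finset.Icc 1 k, (1 + (x - 1) / ℓ) * Real.exp (-((x - 1) / ℓ))

open Finset Real

private lemma hasDerivAt_factor {j : ℕ} (hj : 1 ≤ j) (x : ℝ) :
    HasDerivAt (fun x : ℝ => (1 + (x - 1) / j) * Real.exp (-((x - 1) / j)))
      (-((x - 1) / (j : ℝ) ^ 2) * Real.exp (-((x - 1) / j))) x := by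
  have hc : (0 : ℝ) < j := by exact_mod_cast hj
  have h1 : HasDerivAt (fun x : ℝ => (x - 1) / (j : ℝ)) (1 / j) x := by
    simpa using ((hasDerivAt_id x).sub_const 1).div_const (j : ℝ)
  have h2 : HasDerivAt (fun x : ℝ => 1 + (x - 1) / (j : ℝ)) (1 / j) x := h1.const_add 1
  have h3 : HasDerivAt (fun x : ℝ => Real.exp (-((x - 1) / j)))
      (Real.exp (-((x - 1) / j)) * (-(1 / j))) x := h1.neg.exp
  have h := h2.fun_mul h3
  refine h.congr_deriv ?_
  field_simp
  ring

private lemma hasDerivAt_phi (k : ℕ) (x : ℝ) :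
    HasDerivAt (phiCpartial k)
      (∑ j ∈ Finset.Icc 1 k,
        (∏ ℓ ∈ (Finset.Icc 1 k).erase j, (1 + (x - 1) / ℓ) * Real.exp (-((x - 1) / ℓ))) *
          (-((x - 1) / (j : ℝ) ^ 2) * Real.exp (-((x - 1) / j)))) x := by
  have h := HasDerivAt.finset_prod (u := Finset.Icc 1 k)
    (f := fun (ℓ : ℕ) (x : ℝ) => (1 + (x - 1) / ℓ) * Real.exp (-((x - 1) / ℓ)))
    (f' := fun (j : ℕ) => -((x - 1) / (j : ℝ) ^ 2) * Real.exp (-((x - 1) / j)))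
    (fun j hj => hasDerivAt_factor (Finset.mem_Icc.1 hj).1 x)
  simp [phiCpartial, smul_eq_mul, Finset.prod_fn] at h ⊢
  exact h

private lemma factor_nonneg {ℓ : ℕ} (hℓ : 1 ≤ ℓ) {x : ℝ} (hx : 0 ≤ x) :
    0 ≤ (1 + (x - 1) / ℓ) * Real.exp (-((x - 1) / ℓ)) := by
  have hc : (1 : ℝ) ≤ ℓ := by exact_mod_cast hℓ
  have hc0 : (0 : ℝ) < ℓ := by linarith
  have h1 : (-1 : ℝ) ≤ (x - 1) / ℓ := by
    rw [le_div_iff₀ hc0]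
    nlinarith
  have := Real.exp_pos (-((x - 1) / ℓ))
  nlinarith

private lemma factor_le_one (u : ℝ) : (1 + u) * Real.exp (-u) ≤ 1 := by
  have h := Real.add_one_le_exp u
  have h2 := Real.exp_pos (-u)
  have h3 : Real.exp u * Real.exp (-u) = 1 := by
    rw [← Real.exp_add]; simp
  nlinarith

private lemma sum_inv_sq_le : ∀ k : ℕ, 1 ≤ k →
    ∑ j ∈ Finset.Icc 2 k, (1 : ℝ) / (j : ℝ) ^ 2 ≤ 1 - 1 / k := by
  intro k
  induction k with
  | zero => omega
  | succ n ih =>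
    intro _
    rcases Nat.eq_or_lt_of_le (Nat.one_le_iff_ne_zero.2 (Nat.succ_ne_zero n)) with h | h
    · have hn0 : n = 0 := by omega
      subst hn0
      norm_num
    · have hn : 1 ≤ n := by omega
      have h2 : 2 ≤ n + 1 := by omega
      rw [Finset.sum_Icc_succ_top h2]
      have := ih hn
      have hnR : (1 : ℝ) ≤ n := by exact_mod_cast hn
      have hstep : (1 : ℝ) / ((n : ℝ) + 1) ^ 2 ≤ 1 / n - 1 / (n + 1) := by
        rw [div_sub_div _ _ (by positivity) (by positivity)]
        rw [div_le_div_iff₀ (by positivity) (by positivity)]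
        ring_nf
        nlinarith
      push_cast
      linarith

private lemma lemA {s : ℝ} (hs : 0 ≤ s) (hs1 : s ≤ 1) :
    s * Real.exp s + s * (1 - s) * Real.exp (3 / 2) ≤ Real.exp 1 := by
  have h1 : Real.exp s * (2 - s) ≤ Real.exp 1 := by
    have ha : (2 - s : ℝ) ≤ Real.exp (1 - s) := by
      have := Real.add_one_le_exp (1 - s); linarith
    calc Real.exp s * (2 - s) ≤ Real.exp s * Real.exp (1 - s) :=
          mul_le_mul_of_nonneg_left ha (Real.exp_pos s).le
      _ = Real.exp 1 := by rw [← Real.exp_add]; ring_nf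
  have h2 : Real.exp (3 / 2 : ℝ) ≤ 2 * Real.exp 1 := by
    have ha : (1 / 2 : ℝ) ≤ Real.exp (-(1 / 2)) := by
      have := Real.add_one_le_exp (-(1 / 2) : ℝ); linarith
    have hb : Real.exp (1 / 2 : ℝ) ≤ 2 := by
      have hm : Real.exp (1 / 2 : ℝ) * Real.exp (-(1 / 2) : ℝ) = 1 := by
        rw [← Real.exp_add]; norm_num
      nlinarith [Real.exp_pos (1 / 2 : ℝ)]
    have : Real.exp (3 / 2 : ℝ) = Real.exp 1 * Real.exp (1 / 2) := by
      rw [← Real.exp_add]; norm_num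
    nlinarith [Real.exp_pos 1]
  have hE := Real.exp_pos s
  have hA := Real.exp_pos 1
  have h2s : (0 : ℝ) < 2 - s := by linarith
  rw [← mul_le_mul_iff_of_pos_right h2s]
  have hp1 : s * (Real.exp s * (2 - s)) ≤ s * Real.exp 1 :=
    mul_le_mul_of_nonneg_left h1 hs
  have hq : (0 : ℝ) ≤ s * (1 - s) * (2 - s) := by
    have := sub_nonneg.2 hs1
    positivity
  have hp2 : s * (1 - s) * (2 - s) * Real.exp (3 / 2) ≤ s * (1 - s) * (2 - s) * (2 * Real.exp 1) :=
    mul_le_mul_of_nonneg_left h2 hq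
  have hss : s * (2 - s) ≤ 1 := by nlinarith [sq_nonneg (1 - s)]
  have hp3 : 2 * Real.exp 1 * (1 - s) * (s * (2 - s)) ≤ 2 * Real.exp 1 * (1 - s) * 1 :=
    mul_le_mul_of_nonneg_left hss (by nlinarith [sub_nonneg.2 hs1])
  nlinarith [hp1, hp2, hp3]

private lemma exp_half_facts : Real.exp (-1) + (Real.exp (-1) + 4 * Real.exp (-2)) ≤ Real.exp 1 := by
  have e1 : Real.exp (-1) * Real.exp 1 = 1 := by rw [← Real.exp_add]; norm_num
  have e2 : Real.exp (-2) * (Real.exp 1 * Real.exp 1) = 1 := by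
    rw [← Real.exp_add, ← Real.exp_add]; norm_num
  have h2 : (2 : ℝ) ≤ Real.exp 1 := by have := Real.add_one_le_exp 1; linarith
  have ha2 : 2 * Real.exp (-1) ≤ 1 := by nlinarith [Real.exp_pos (-1)]
  have hb4 : 4 * Real.exp (-2) ≤ 1 := by nlinarith [Real.exp_pos (-2), sq_nonneg (Real.exp 1 - 2)]
  linarith

private lemma abs_sum_bound (k : ℕ) (hk : 1 ≤ k) (x : ℝ) (hx : 0 ≤ x) :
    |∑ j ∈ Finset.Icc 1 k,
        (∏ ℓ ∈ (Finset.Icc 1 k).erase j, (1 + (x - 1) / ℓ) * Real.exp (-((x - 1) / ℓ))) *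
          (-((x - 1) / (j : ℝ) ^ 2) * Real.exp (-((x - 1) / j)))| ≤ Real.exp 1 := by
  set F : ℕ → ℝ := fun ℓ : ℕ => (1 + (x - 1) / ℓ) * Real.exp (-((x - 1) / ℓ)) with hF
  set T : ℕ → ℝ := fun j : ℕ =>
    (∏ ℓ ∈ (Finset.Icc 1 k).erase j, F ℓ) *
      (-((x - 1) / (j : ℝ) ^ 2) * Real.exp (-((x - 1) / j))) with hT
  have h1k : (1 : ℕ) ∈ Finset.Icc 1 k := Finset.mem_Icc.2 ⟨le_refl 1, hk⟩
  have hPnn : ∀ j : ℕ, 0 ≤ ∏ ℓ ∈ (Finset.Icc 1 k).erase j, F ℓ := by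
    intro j
    refine Finset.prod_nonneg fun ℓ hℓ => ?_
    exact factor_nonneg (Finset.mem_Icc.1 (Finset.mem_of_mem_erase hℓ)).1 hx
  have hPle : ∀ j : ℕ, (∏ ℓ ∈ (Finset.Icc 1 k).erase j, F ℓ) ≤ 1 := by
    intro j
    refine Finset.prod_le_one (fun ℓ hℓ => ?_) (fun ℓ hℓ => ?_)
    · exact factor_nonneg (Finset.mem_Icc.1 (Finset.mem_of_mem_erase hℓ)).1 hx
    · exact factor_le_one _
  have hF1nn : 0 ≤ F 1 := factor_nonneg le_rfl hx
  have hPleF1 : ∀ j ∈ Finset.Ioc 1 k, (∏ ℓ ∈ (Finset.Icc 1 k).erase j, F ℓ) ≤ F 1 := by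
    intro j hj
    have hj2 : 1 < j := (Finset.mem_Ioc.1 hj).1
    have h1e : (1 : ℕ) ∈ (Finset.Icc 1 k).erase j := Finset.mem_erase.2 ⟨by omega, h1k⟩
    calc (∏ ℓ ∈ (Finset.Icc 1 k).erase j, F ℓ)
        = F 1 * ∏ ℓ ∈ ((Finset.Icc 1 k).erase j).erase 1, F ℓ :=
          (Finset.mul_prod_erase _ F h1e).symm
      _ ≤ F 1 * 1 := by
          refine mul_le_mul_of_nonneg_left ?_ hF1nn
          refine Finset.prod_le_one (fun ℓ hℓ => ?_) (fun ℓ hℓ => ?_)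
          · exact factor_nonneg
              (Finset.mem_Icc.1 (Finset.mem_of_mem_erase (Finset.mem_of_mem_erase hℓ))).1 hx
          · exact factor_le_one _
      _ = F 1 := mul_one _
  have hTabs : ∀ j : ℕ,
      |T j| = (∏ ℓ ∈ (Finset.Icc 1 k).erase j, F ℓ) *
        (|x - 1| / (j : ℝ) ^ 2 * Real.exp (-((x - 1) / j))) := by
    intro j
    rw [hT]
    rw [abs_mul, abs_of_nonneg (hPnn j), abs_mul, abs_neg, abs_div,
      abs_of_nonneg (Real.exp_pos _).le, abs_of_nonneg (sq_nonneg ((j : ℝ)))]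
  have hsplit : ∑ j ∈ Finset.Icc 1 k, T j = T 1 + ∑ j ∈ Finset.Ioc 1 k, T j := by
    have h := Finset.add_sum_erase (Finset.Icc 1 k) T h1k
    rw [Finset.Icc_erase_left] at h
    exact h.symm
  rw [hsplit]
  have hIoc : Finset.Ioc 1 k = Finset.Icc 2 k := by rw [← Finset.Icc_add_one_left_eq_Ioc]; rfl
  have hstep1 : |T 1 + ∑ j ∈ Finset.Ioc 1 k, T j| ≤ |T 1| + ∑ j ∈ Finset.Ioc 1 k, |T j| :=
    (abs_add_le _ _).trans (add_le_add_right (Finset.abs_sum_le_sum_abs _ _) _)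
  have hsum_inv : ∑ j ∈ Finset.Ioc 1 k, (1 : ℝ) / (j : ℝ) ^ 2 ≤ 1 := by
    rw [hIoc]
    have := sum_inv_sq_le k hk
    have hk1 : (0 : ℝ) < (k : ℝ) := by exact_mod_cast hk
    have : (0:ℝ) ≤ 1 / (k:ℝ) := by positivity
    linarith [sum_inv_sq_le k hk]
  rcases le_total x 1 with hx1 | hx1
  -- Case 0 ≤ x ≤ 1
  · have habs : |x - 1| = 1 - x := by rw [abs_of_nonpos (by linarith)]; ring
    have hT1 : |T 1| ≤ (1 - x) * Real.exp (1 - x) := by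
      rw [hTabs 1, habs]
      simp only [Nat.cast_one, one_pow, div_one]
      rw [show -(x - 1) = 1 - x from by ring]
      have h1 := hPle 1
      have h0 := hPnn 1
      have hE := Real.exp_pos (1 - x)
      nlinarith [mul_nonneg (sub_nonneg.2 hx1) hE.le]
    have hF1x : F 1 = x * Real.exp (1 - x) := by
      simp only [hF, Nat.cast_one, div_one]
      rw [show -(x - 1) = 1 - x from by ring]
      ring
    have hTj : ∀ j ∈ Finset.Ioc 1 k, |T j| ≤
        (1 - x) * x * Real.exp (3 / 2) * (1 / (j : ℝ) ^ 2) := by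
      intro j hj
      have hj2 : 1 < j := (Finset.mem_Ioc.1 hj).1
      have hjR : (2 : ℝ) ≤ (j : ℝ) := by exact_mod_cast hj2
      have hjpos : (0 : ℝ) < (j : ℝ) := by linarith
      rw [hTabs j, habs]
      have hEj : Real.exp (-((x - 1) / (j : ℝ))) ≤ Real.exp ((1 - x) / 2) := by
        apply Real.exp_le_exp.2
        have he : -((x - 1) / (j : ℝ)) = (1 - x) / (j : ℝ) := by ring
        rw [he]
        exact div_le_div_of_nonneg_left (by linarith) (by norm_num) hjR
      have h1x : (0 : ℝ) ≤ 1 - x := by linarith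
      calc (∏ ℓ ∈ (Finset.Icc 1 k).erase j, F ℓ) *
            ((1 - x) / (j : ℝ) ^ 2 * Real.exp (-((x - 1) / j)))
          ≤ (x * Real.exp (1 - x)) * ((1 - x) / (j : ℝ) ^ 2 * Real.exp ((1 - x) / 2)) := by
            refine mul_le_mul (hF1x ▸ hPleF1 j hj) ?_ ?_ ?_
            · exact mul_le_mul_of_nonneg_left hEj (by positivity)
            · positivity
            · positivity
        _ = (1 - x) * x * (Real.exp (1 - x) * Real.exp ((1 - x) / 2)) * (1 / (j : ℝ) ^ 2) := by
            ring
        _ = (1 - x) * x * Real.exp (3 * (1 - x) / 2) * (1 / (j : ℝ) ^ 2) := by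
            rw [← Real.exp_add]; ring_nf
        _ ≤ (1 - x) * x * Real.exp (3 / 2) * (1 / (j : ℝ) ^ 2) := by
            refine mul_le_mul_of_nonneg_right ?_ (by positivity)
            refine mul_le_mul_of_nonneg_left ?_ (by positivity)
            exact Real.exp_le_exp.2 (by linarith)
    have hsum : ∑ j ∈ Finset.Ioc 1 k, |T j| ≤ (1 - x) * x * Real.exp (3 / 2) := by
      calc ∑ j ∈ Finset.Ioc 1 k, |T j|
          ≤ ∑ j ∈ Finset.Ioc 1 k, (1 - x) * x * Real.exp (3 / 2) * (1 / (j : ℝ) ^ 2) :=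
            Finset.sum_le_sum hTj
        _ = (1 - x) * x * Real.exp (3 / 2) * ∑ j ∈ Finset.Ioc 1 k, (1 : ℝ) / (j : ℝ) ^ 2 := by
            rw [Finset.mul_sum]
        _ ≤ (1 - x) * x * Real.exp (3 / 2) * 1 := by
            refine mul_le_mul_of_nonneg_left hsum_inv ?_
            have h1x : (0 : ℝ) ≤ 1 - x := by linarith
            positivity
        _ = (1 - x) * x * Real.exp (3 / 2) := mul_one _
    have hlemA := lemA (show (0:ℝ) ≤ 1 - x by linarith) (show (1:ℝ) - x ≤ 1 by linarith)
    have : (1 - x) * Real.exp (1 - x) + (1 - x) * x * Real.exp (3 / 2) ≤ Real.exp 1 := by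
      nlinarith [hlemA]
    linarith [hstep1, hT1, hsum]
  -- Case 1 ≤ x
  · have habs : |x - 1| = x - 1 := abs_of_nonneg (by linarith)
    have ht : (0 : ℝ) ≤ x - 1 := by linarith
    have hb1 : (x - 1) * Real.exp (-(x - 1)) ≤ Real.exp (-1) := by
      have ha := Real.add_one_le_exp (x - 2)
      have hm := mul_le_mul_of_nonneg_right (show x - 1 ≤ Real.exp (x - 2) by linarith)
        (Real.exp_pos (-(x - 1))).le
      have he : Real.exp (x - 2) * Real.exp (-(x - 1)) = Real.exp (-1) := by
        rw [← Real.exp_add]; ring_nf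
      linarith [he ▸ hm]
    have hb2 : (x - 1) ^ 2 * Real.exp (-(x - 1)) ≤ 4 * Real.exp (-2) := by
      have ha := Real.add_one_le_exp ((x - 1) / 2 - 1)
      have hsq : (x - 1) ^ 2 ≤ 4 * (Real.exp ((x - 1) / 2 - 1) * Real.exp ((x - 1) / 2 - 1)) := by
        nlinarith [Real.exp_pos ((x - 1) / 2 - 1)]
      have he1 : Real.exp ((x - 1) / 2 - 1) * Real.exp ((x - 1) / 2 - 1) = Real.exp (x - 3) := by
        rw [← Real.exp_add]; ring_nf
      have he2 : Real.exp (x - 3) * Real.exp (-(x - 1)) = Real.exp (-2) := by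
        rw [← Real.exp_add]; ring_nf
      rw [he1] at hsq
      have hm := mul_le_mul_of_nonneg_right hsq (Real.exp_pos (-(x - 1))).le
      nlinarith [hm, he2]
    have hT1 : |T 1| ≤ Real.exp (-1) := by
      rw [hTabs 1, habs]
      simp only [Nat.cast_one, one_pow, div_one]
      have h1 := hPle 1
      have h0 := hPnn 1
      have hE := (Real.exp_pos (-(x - 1))).le
      nlinarith [mul_nonneg ht hE, hb1]
    have hF1x : F 1 = (1 + (x - 1)) * Real.exp (-(x - 1)) := by
      simp only [hF, Nat.cast_one, div_one]
    have hTj : ∀ j ∈ Finset.Ioc 1 k, |T j| ≤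
        (Real.exp (-1) + 4 * Real.exp (-2)) * (1 / (j : ℝ) ^ 2) := by
      intro j hj
      have hj2 : 1 < j := (Finset.mem_Ioc.1 hj).1
      have hjR : (2 : ℝ) ≤ (j : ℝ) := by exact_mod_cast hj2
      have hjpos : (0 : ℝ) < (j : ℝ) := by linarith
      rw [hTabs j, habs]
      have hEj : Real.exp (-((x - 1) / (j : ℝ))) ≤ 1 := by
        rw [Real.exp_le_one_iff]
        have : (0 : ℝ) ≤ (x - 1) / (j : ℝ) := by positivity
        linarith
      calc (∏ ℓ ∈ (Finset.Icc 1 k).erase j, F ℓ) *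
            ((x - 1) / (j : ℝ) ^ 2 * Real.exp (-((x - 1) / j)))
          ≤ ((1 + (x - 1)) * Real.exp (-(x - 1))) * ((x - 1) / (j : ℝ) ^ 2 * 1) := by
            refine mul_le_mul (hF1x ▸ hPleF1 j hj) ?_ ?_ ?_
            · exact mul_le_mul_of_nonneg_left hEj (by positivity)
            · positivity
            · have := Real.exp_pos (-(x-1)); nlinarith
        _ = ((x - 1) * Real.exp (-(x - 1)) + (x - 1) ^ 2 * Real.exp (-(x - 1))) *
              (1 / (j : ℝ) ^ 2) := by ring
        _ ≤ (Real.exp (-1) + 4 * Real.exp (-2)) * (1 / (j : ℝ) ^ 2) := by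
            refine mul_le_mul_of_nonneg_right ?_ (by positivity)
            linarith [hb1, hb2]
    have hsum : ∑ j ∈ Finset.Ioc 1 k, |T j| ≤ Real.exp (-1) + 4 * Real.exp (-2) := by
      calc ∑ j ∈ Finset.Ioc 1 k, |T j|
          ≤ ∑ j ∈ Finset.Ioc 1 k, (Real.exp (-1) + 4 * Real.exp (-2)) * (1 / (j : ℝ) ^ 2) :=
            Finset.sum_le_sum hTj
        _ = (Real.exp (-1) + 4 * Real.exp (-2)) * ∑ j ∈ Finset.Ioc 1 k, (1 : ℝ) / (j : ℝ) ^ 2 := by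
            rw [Finset.mul_sum]
        _ ≤ (Real.exp (-1) + 4 * Real.exp (-2)) * 1 := by
            refine mul_le_mul_of_nonneg_left hsum_inv ?_
            positivity
        _ = Real.exp (-1) + 4 * Real.exp (-2) := mul_one _
    linarith [hstep1, hT1, hsum, exp_half_facts]

private lemma main_bound (k : ℕ) (hk : 1 ≤ k) (x : ℝ) (hx : 0 ≤ x) :
    |deriv (phiCpartial k) x| ≤ Real.exp 1 := by
  rw [(hasDerivAt_phi k x).deriv]
  exact abs_sum_bound k hk x hx

/-- For every `k ≥ 1` and every `x ≥ 0`, `|φ_k'(x)| ≤ e`; in particular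
`sup_{x ∈ ℝ₊} |φ_k'(x)| = O(1)` as `k → ∞`. -/
theorem deriv_phiCpartial_bounded :
    (∀ k : ℕ, 1 ≤ k → ∀ x : ℝ, 0 ≤ x → |deriv (phiCpartial k) x| ≤ Real.exp 1) ∧
    ∃ C : ℝ, ∀ k : ℕ, 1 ≤ k → ∀ x : ℝ, 0 ≤ x → |deriv (phiCpartial k) x| ≤ C := by
  exact ⟨main_bound, Real.exp 1, main_bound⟩
end

section
/- For k ≥ 1 define φ_k(x) := ∏_{ℓ=1}^k (1 + (x−1)/ℓ) e^{−(x−1)/ℓ} for x ≥ 0, and for every x > 0, φ_k'(x) = φ_k(x) (1 − x) Σ_{ℓ=1}^k 1/(ℓ(ℓ − 1 + x)), and moreover |φ_k'(x)| ≤ e^{1−x} |1 − x²| for all x ≥ 0 and all k ≥ 1. -/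
/-- One factor of the partial product. -/
noncomputable def phiF (ℓ : ℕ) (x : ℝ) : ℝ :=
  (1 + (x - 1) / ℓ) * Real.exp (-((x - 1) / ℓ))

/-- The derivative of one factor. -/
noncomputable def phiF' (ℓ : ℕ) (x : ℝ) : ℝ :=
  -((x - 1) / (ℓ : ℝ) ^ 2) * Real.exp (-((x - 1) / ℓ))

lemma phiCpartial_eq (k : ℕ) (x : ℝ) :
    phiCpartial k x = ∏ ℓ ∈ Finset.Icc 1 k, phiF ℓ x := rfl

lemma phiF_hasDerivAt (ℓ : ℕ) (hℓ : 1 ≤ ℓ) (x : ℝ) :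
    HasDerivAt (phiF ℓ) (phiF' ℓ x) x := by
  have hℓ0 : (ℓ : ℝ) ≠ 0 := Nat.cast_ne_zero.2 (by omega)
  have h1 : HasDerivAt (fun x : ℝ => 1 + (x - 1) / ℓ) (1 / ℓ) x := by
    simpa using (((hasDerivAt_id x).sub_const 1).div_const (ℓ : ℝ)).const_add 1
  have h2 : HasDerivAt (fun x : ℝ => Real.exp (-((x - 1) / ℓ)))
      (Real.exp (-((x - 1) / ℓ)) * (-(1 / ℓ))) x := by
    have h3 : HasDerivAt (fun x : ℝ => -((x - 1) / ℓ)) (-(1 / ℓ)) x := by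
      exact (by simpa using ((hasDerivAt_id x).sub_const 1).div_const (ℓ : ℝ) :
        HasDerivAt (fun x : ℝ => (x - 1) / ℓ) (1 / ℓ) x).neg
    exact h3.exp
  have h := h1.mul h2
  refine h.congr_deriv ?_
  unfold phiF'
  field_simp
  ring

lemma phi_hasDerivAt (k : ℕ) (x : ℝ) :
    HasDerivAt (phiCpartial k)
      (∑ ℓ ∈ Finset.Icc 1 k,
        (∏ j ∈ (Finset.Icc 1 k).erase ℓ, phiF j x) * phiF' ℓ x) x := by
  have h := HasDerivAt.finset_prod (u := Finset.Icc 1 k) (f := phiF)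
    (f' := fun ℓ => phiF' ℓ x) (x := x)
    (fun i hi => phiF_hasDerivAt i (Finset.mem_Icc.1 hi).1 x)
  simp only [phiF, smul_eq_mul, Finset.prod_fn] at h ⊢
  exact h

lemma phiF_le_one (ℓ : ℕ) (x : ℝ) : phiF ℓ x ≤ 1 := by
  unfold phiF
  set t : ℝ := (x - 1) / ℓ with ht
  have h1 : t + 1 ≤ Real.exp t := Real.add_one_le_exp t
  have h2 : Real.exp t * Real.exp (-t) = 1 := by
    rw [← Real.exp_add]; simp
  have h3 : (0 : ℝ) < Real.exp (-t) := Real.exp_pos _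
  nlinarith [mul_nonneg (sub_nonneg.2 h1) h3.le]

lemma phiF_nonneg (ℓ : ℕ) (hℓ : 1 ≤ ℓ) (x : ℝ) (hx : 0 ≤ x) : 0 ≤ phiF ℓ x := by
  unfold phiF
  have hc : (1 : ℝ) ≤ (ℓ : ℝ) := by exact_mod_cast hℓ
  have h0 : (0 : ℝ) < (ℓ : ℝ) := by linarith
  have h1 : -1 ≤ (x - 1) / ℓ := by
    rw [le_div_iff₀ h0]; nlinarith
  exact mul_nonneg (by linarith) (Real.exp_pos _).le

lemma icc_split (k : ℕ) (hk : 1 ≤ k) :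
    Finset.Icc 1 k = insert 1 (Finset.Icc 2 k) := by
  ext n
  simp only [Finset.mem_Icc, Finset.mem_insert]
  omega

lemma one_not_mem : (1 : ℕ) ∉ Finset.Icc 2 k := by
  simp

lemma phiF_one (x : ℝ) : phiF 1 x = x * Real.exp (1 - x) := by
  unfold phiF
  norm_num

lemma phi_le (k : ℕ) (hk : 1 ≤ k) (x : ℝ) (hx : 0 ≤ x) :
    phiCpartial k x ≤ x * Real.exp (1 - x) := by
  rw [phiCpartial_eq, icc_split k hk, Finset.prod_insert one_not_mem, phiF_one]
  have h1 : ∏ j ∈ Finset.Icc 2 k, phiF j x ≤ 1 :=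
    Finset.prod_le_one
      (fun j hj => phiF_nonneg j (by have := (Finset.mem_Icc.1 hj).1; omega) x hx)
      (fun j _ => phiF_le_one j x)
  have h2 : 0 ≤ x * Real.exp (1 - x) := mul_nonneg hx (Real.exp_pos _).le
  nlinarith [Finset.prod_nonneg
    (fun j hj => phiF_nonneg j (by have := (Finset.mem_Icc.1 hj).1; omega) x hx)
    (f := fun j => phiF j x) (s := Finset.Icc 2 k)]

lemma phi_nonneg (k : ℕ) (x : ℝ) (hx : 0 ≤ x) : 0 ≤ phiCpartial k x := by
  rw [phiCpartial_eq]
  exact Finset.prod_nonneg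
    (fun j hj => phiF_nonneg j (Finset.mem_Icc.1 hj).1 x hx)

lemma tel (k : ℕ) (hk : 1 ≤ k) :
    ∑ ℓ ∈ Finset.Icc 2 k, 1 / ((ℓ : ℝ) * ((ℓ : ℝ) - 1)) = 1 - 1 / k := by
  induction k, hk using Nat.le_induction with
  | base => simp
  | succ n hn ih =>
    rw [Finset.sum_Icc_succ_top (by omega : 2 ≤ n + 1), ih]
    have hn0 : (n : ℝ) ≠ 0 := Nat.cast_ne_zero.2 (by omega)
    have hn1 : (n : ℝ) + 1 ≠ 0 := by positivity
    push_cast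
    field_simp
    ring_nf
    rw [mul_inv_cancel₀ hn0]
    ring

lemma sum_bound (k : ℕ) (hk : 1 ≤ k) (x : ℝ) (hx : 0 < x) :
    ∑ ℓ ∈ Finset.Icc 1 k, 1 / ((ℓ : ℝ) * ((ℓ : ℝ) - 1 + x)) ≤ 1 / x + 1 := by
  rw [icc_split k hk, Finset.sum_insert one_not_mem]
  have h1 : (1 : ℝ) / ((1 : ℕ) * (((1 : ℕ) : ℝ) - 1 + x)) = 1 / x := by norm_num
  have h2 : ∑ ℓ ∈ Finset.Icc 2 k, 1 / ((ℓ : ℝ) * ((ℓ : ℝ) - 1 + x)) ≤ 1 := by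
    calc ∑ ℓ ∈ Finset.Icc 2 k, 1 / ((ℓ : ℝ) * ((ℓ : ℝ) - 1 + x))
        ≤ ∑ ℓ ∈ Finset.Icc 2 k, 1 / ((ℓ : ℝ) * ((ℓ : ℝ) - 1)) := by
          apply Finset.sum_le_sum
          intro ℓ hℓ
          have h2ℓ : (2 : ℝ) ≤ (ℓ : ℝ) := by exact_mod_cast (Finset.mem_Icc.1 hℓ).1
          apply one_div_le_one_div_of_le (by nlinarith) (by nlinarith)
      _ = 1 - 1 / k := tel k hk
      _ ≤ 1 := by
          have : (0 : ℝ) < k := by exact_mod_cast hk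
          have : (0 : ℝ) ≤ 1 / (k : ℝ) := by positivity
          linarith
  rw [h1]
  linarith

lemma sum_nonneg' (k : ℕ) (x : ℝ) (hx : 0 < x) :
    0 ≤ ∑ ℓ ∈ Finset.Icc 1 k, 1 / ((ℓ : ℝ) * ((ℓ : ℝ) - 1 + x)) := by
  apply Finset.sum_nonneg
  intro ℓ hℓ
  have h1 : (1 : ℝ) ≤ (ℓ : ℝ) := by exact_mod_cast (Finset.mem_Icc.1 hℓ).1
  have h2 : 0 < (ℓ : ℝ) * ((ℓ : ℝ) - 1 + x) := by nlinarith
  positivity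

lemma phiF'_eq (ℓ : ℕ) (hℓ : 1 ≤ ℓ) (x : ℝ) (hx : 0 < x) :
    phiF' ℓ x = phiF ℓ x * (1 - x) * (1 / ((ℓ : ℝ) * ((ℓ : ℝ) - 1 + x))) := by
  unfold phiF phiF'
  have hc : (1 : ℝ) ≤ (ℓ : ℝ) := by exact_mod_cast hℓ
  have h0 : (ℓ : ℝ) ≠ 0 := by linarith
  have h1 : (ℓ : ℝ) - 1 + x ≠ 0 := by linarith
  field_simp
  ring

lemma deriv_formula (k : ℕ) (hk : 1 ≤ k) (x : ℝ) (hx : 0 < x) :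
    deriv (phiCpartial k) x
      = phiCpartial k x * (1 - x)
        * ∑ ℓ ∈ Finset.Icc 1 k, 1 / ((ℓ : ℝ) * ((ℓ : ℝ) - 1 + x)) := by
  rw [(phi_hasDerivAt k x).deriv, Finset.mul_sum]
  apply Finset.sum_congr rfl
  intro ℓ hℓ
  have hℓ1 : 1 ≤ ℓ := (Finset.mem_Icc.1 hℓ).1
  have hsplit : phiCpartial k x = phiF ℓ x * ∏ j ∈ (Finset.Icc 1 k).erase ℓ, phiF j x := by
    rw [phiCpartial_eq]
    exact (Finset.mul_prod_erase _ _ hℓ).symm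
  rw [phiF'_eq ℓ hℓ1 x hx, hsplit]
  ring

/-- For `k ≥ 1`: for every `x > 0`,
`φ_k'(x) = φ_k(x) (1 - x) ∑_{ℓ=1}^k 1/(ℓ(ℓ - 1 + x))`, and moreover
`|φ_k'(x)| ≤ e^{1-x} |1 - x²|` for all `x ≥ 0`. -/
theorem deriv_phiCpartial_formula (k : ℕ) (hk : 1 ≤ k) :
    (∀ x : ℝ, 0 < x →
      deriv (phiCpartial k) x
        = phiCpartial k x * (1 - x) * ∑ ℓ ∈ Finset.Icc 1 k, 1 / ((ℓ : ℝ) * ((ℓ : ℝ) - 1 + x))) ∧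
    (∀ x : ℝ, 0 ≤ x → |deriv (phiCpartial k) x| ≤ Real.exp (1 - x) * |1 - x ^ 2|) := by
  constructor
  · exact fun x hx => deriv_formula k hk x hx
  · intro x hx
    rcases eq_or_lt_of_le hx with h0 | hxpos
    · -- x = 0
      subst h0
      have hd := (phi_hasDerivAt k 0).deriv
      rw [hd, icc_split k hk, Finset.sum_insert one_not_mem, ← icc_split k hk]
      have hz : ∀ ℓ ∈ Finset.Icc 2 k,
          (∏ j ∈ (Finset.Icc 1 k).erase ℓ, phiF j 0) * phiF' ℓ 0 = 0 := by
        intro ℓ hℓ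
        have hv : phiF 1 0 = 0 := by unfold phiF; norm_num
        have h1mem : (1 : ℕ) ∈ (Finset.Icc 1 k).erase ℓ := by
          rw [Finset.mem_erase]
          exact ⟨by have := (Finset.mem_Icc.1 hℓ).1; omega,
            Finset.mem_Icc.2 ⟨le_refl 1, hk⟩⟩
        rw [Finset.prod_eq_zero h1mem hv, zero_mul]
      rw [Finset.sum_eq_zero hz, add_zero]
      have herase : (Finset.Icc 1 k).erase 1 = Finset.Icc 2 k := by
        ext n
        simp only [Finset.mem_erase, Finset.mem_Icc]
        omega
      have hone : phiF' 1 0 = Real.exp 1 := by unfold phiF'; norm_num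
      rw [herase, hone]
      have hP0 : 0 ≤ ∏ j ∈ Finset.Icc 2 k, phiF j 0 :=
        Finset.prod_nonneg
          (fun j hj => phiF_nonneg j (by have := (Finset.mem_Icc.1 hj).1; omega) 0 le_rfl)
      have hP1 : ∏ j ∈ Finset.Icc 2 k, phiF j 0 ≤ 1 :=
        Finset.prod_le_one
          (fun j hj => phiF_nonneg j (by have := (Finset.mem_Icc.1 hj).1; omega) 0 le_rfl)
          (fun j _ => phiF_le_one j 0)
      rw [abs_of_nonneg (mul_nonneg hP0 (Real.exp_pos _).le)]
      have : Real.exp (1 - 0) * |1 - (0:ℝ) ^ 2| = Real.exp 1 := by norm_num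
      rw [this]
      nlinarith [Real.exp_pos (1:ℝ)]
    · -- x > 0
      rw [deriv_formula k hk x hxpos]
      set S := ∑ ℓ ∈ Finset.Icc 1 k, 1 / ((ℓ : ℝ) * ((ℓ : ℝ) - 1 + x)) with hS
      have hS0 : 0 ≤ S := sum_nonneg' k x hxpos
      have hSb : S ≤ 1 / x + 1 := sum_bound k hk x hxpos
      have hφ0 : 0 ≤ phiCpartial k x := phi_nonneg k x hx
      have hφb : phiCpartial k x ≤ x * Real.exp (1 - x) := phi_le k hk x hx
      have habs : |1 - x ^ 2| = |1 - x| * (1 + x) := by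
        rw [show (1 : ℝ) - x ^ 2 = (1 - x) * (1 + x) by ring, abs_mul,
          abs_of_nonneg (by linarith : (0:ℝ) ≤ 1 + x)]
      rw [abs_mul, abs_mul, abs_of_nonneg hφ0, abs_of_nonneg hS0, habs]
      calc phiCpartial k x * |1 - x| * S
          ≤ x * Real.exp (1 - x) * |1 - x| * (1 / x + 1) := by
            apply mul_le_mul
              (mul_le_mul_of_nonneg_right hφb (abs_nonneg _)) hSb hS0 (by positivity)
        _ = Real.exp (1 - x) * (|1 - x| * (1 + x)) := by
            field_simp
end

section
/- Define Φ_C(x) := ∏_{ℓ=1}^∞ (1 + (x−1)/ℓ) e^{−(x−1)/ℓ} and φ_k(x) := ∏_{ℓ=1}^k (1 + (x−1)/ℓ) e^{−(x−1)/ℓ} for x ≥ 0. Set C₀ := ∫_0^1 u/(1 − u/2) du (a finite positive constant). Then for every k ≥ 1 and every x ∈ [0,1], 0 ≤ φ_k(x) − Φ_C(x) ≤ C₀/k; in particular sup_{x ∈ [0,1]} |φ_k(x) − Φ_C(x)| = O(1/k) as k → ∞. -/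
/-- The infinite product `Φ_C(x) = ∏_{ℓ=1}^∞ (1 + (x-1)/ℓ) e^{-(x-1)/ℓ}`. -/
noncomputable def PhiC (x : ℝ) : ℝ :=
  ∏' ℓ : ℕ, (1 + (x - 1) / ((ℓ : ℝ) + 1)) * Real.exp (-((x - 1) / ((ℓ : ℝ) + 1)))

/-- `(1-u)e^u ≤ 1` for all real `u`. -/
lemma one_sub_mul_exp_le_one (u : ℝ) : (1 - u) * Real.exp u ≤ 1 := by
  have h : 1 - u ≤ Real.exp (-u) := by linarith [Real.add_one_le_exp (-u)]
  calc (1 - u) * Real.exp u ≤ Real.exp (-u) * Real.exp u :=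
        mul_le_mul_of_nonneg_right h (Real.exp_pos u).le
    _ = 1 := by rw [← Real.exp_add]; simp

/-- Quantitative lower bound: `1 - (1-u)e^u ≤ u²/(2(1-u))` for `0 ≤ u < 1`. -/
lemma one_sub_one_sub_mul_exp_le (u : ℝ) (hu0 : 0 ≤ u) (hu1 : u < 1) :
    1 - (1 - u) * Real.exp u ≤ u ^ 2 / (2 * (1 - u)) := by
  rw [le_div_iff₀ (by linarith)]
  have h := Real.quadratic_le_exp_of_nonneg hu0
  nlinarith [mul_le_mul_of_nonneg_left h (sq_nonneg (1 - u)), sq_nonneg u,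
    mul_nonneg (mul_nonneg hu0 hu0) (mul_nonneg hu0 hu0)]

/-- Weierstrass-type product lower bound. -/
lemma one_sub_sum_le_prod {b : ℕ → ℝ} (hb0 : ∀ i, 0 ≤ b i) (hb1 : ∀ i, b i ≤ 1)
    (T : Finset ℕ) : 1 - ∑ i ∈ T, (1 - b i) ≤ ∏ i ∈ T, b i := by
  induction T using Finset.cons_induction with
  | empty => simp
  | cons j T hj ih =>
    rw [Finset.prod_cons, Finset.sum_cons]
    have hS : 0 ≤ ∑ i ∈ T, (1 - b i) := Finset.sum_nonneg fun i _ => by linarith [hb1 i]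
    have hP : 0 ≤ ∏ i ∈ T, b i := Finset.prod_nonneg fun i _ => hb0 i
    nlinarith [hb0 j, hb1 j, mul_le_mul_of_nonneg_left ih (hb0 j)]

/-- Telescoping tail bound. -/
lemma sum_tail_le (k : ℕ) (hk : 1 ≤ k) (T : Finset ℕ) (hT : ∀ i ∈ T, k ≤ i) :
    ∑ i ∈ T, (1 : ℝ) / (2 * i * (i + 1)) ≤ 1 / (2 * k) := by
  set N := T.sup id with hN
  have hsub : T ⊆ Finset.Icc k N := fun i hi =>
    Finset.mem_Icc.2 ⟨hT i hi, Finset.le_sup (f := id) hi⟩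
  have hkpos : (0 : ℝ) < k := by exact_mod_cast hk
  calc ∑ i ∈ T, (1 : ℝ) / (2 * i * (i + 1))
      ≤ ∑ i ∈ Finset.Icc k N, (1 : ℝ) / (2 * i * (i + 1)) :=
        Finset.sum_le_sum_of_subset_of_nonneg hsub (fun i hi _ => by positivity)
    _ = ∑ i ∈ Finset.Icc k N, ((1 : ℝ) / (2 * i) - 1 / (2 * (i + 1))) := by
        refine Finset.sum_congr rfl fun i hi => ?_
        have h1 : 1 ≤ i := le_trans hk (Finset.mem_Icc.1 hi).1
        have hipos : (0 : ℝ) < i := by exact_mod_cast h1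
        field_simp
        ring
    _ = ∑ j ∈ Finset.range (N + 1 - k), ((fun m : ℕ => (1 : ℝ) / (2 * (k + m : ℕ))) j
          - (fun m : ℕ => (1 : ℝ) / (2 * (k + m : ℕ))) (j + 1)) := by
        rw [← Finset.Ico_add_one_right_eq_Icc, Finset.sum_Ico_eq_sum_range]
        refine Finset.sum_congr rfl fun j hj => ?_
        push_cast
        try ring_nf
    _ = (1 : ℝ) / (2 * (k + 0 : ℕ)) - 1 / (2 * (k + (N + 1 - k) : ℕ)) :=
        Finset.sum_range_sub' (fun m : ℕ => (1 : ℝ) / (2 * (k + m : ℕ))) (N + 1 - k)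
    _ ≤ 1 / (2 * k) := by
        have : (0 : ℝ) ≤ 1 / (2 * ((k + (N + 1 - k) : ℕ) : ℝ)) := by positivity
        simp only [Nat.add_zero]
        linarith

/-- With `C₀ := ∫_0^1 u/(1 - u/2) du`, for every `k ≥ 1` and every `x ∈ [0,1]` one has
`0 ≤ φ_k(x) - Φ_C(x) ≤ C₀/k`; in particular `sup_{[0,1]} |φ_k - Φ_C| = O(1/k)`. -/
theorem phiCpartial_sub_PhiC_on_unit_interval (k : ℕ) (hk : 1 ≤ k)
    (x : ℝ) (hx : x ∈ Set.Icc (0 : ℝ) 1) :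
    0 ≤ phiCpartial k x - PhiC x ∧
      phiCpartial k x - PhiC x ≤ (∫ u in (0 : ℝ)..1, u / (1 - u / 2)) / k := by
  obtain ⟨hx0, hx1⟩ := hx
  set t : ℝ := 1 - x with ht
  have ht0 : 0 ≤ t := by linarith
  have ht1 : t ≤ 1 := by linarith
  set a : ℕ → ℝ := fun ℓ => (1 + (x - 1) / ((ℓ : ℝ) + 1)) * Real.exp (-((x - 1) / ((ℓ : ℝ) + 1)))
    with ha_def
  have ha_eq : ∀ i : ℕ, a i = (1 - t / ((i : ℝ) + 1)) * Real.exp (t / ((i : ℝ) + 1)) := by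
    intro i
    have : -((x - 1) / ((i : ℝ) + 1)) = t / ((i : ℝ) + 1) := by rw [ht]; ring
    rw [ha_def]
    simp only [this]
    congr 1
    rw [ht]; ring
  -- basic bounds on u_i := t/(i+1)
  have hu0 : ∀ i : ℕ, 0 ≤ t / ((i : ℝ) + 1) := fun i => by positivity
  have hu1 : ∀ i : ℕ, t / ((i : ℝ) + 1) ≤ 1 := by
    intro i
    rw [div_le_one (by positivity)]
    have h1 : (0 : ℝ) ≤ (i : ℝ) := Nat.cast_nonneg i
    linarith
  have ha0 : ∀ i, 0 ≤ a i := by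
    intro i
    rw [ha_eq i]
    have := hu1 i
    have := Real.exp_pos (t / ((i : ℝ) + 1))
    nlinarith
  have ha1 : ∀ i, a i ≤ 1 := by
    intro i
    rw [ha_eq i]
    exact one_sub_mul_exp_le_one _
  -- quantitative bound for i ≥ 1
  have haB : ∀ i : ℕ, 1 ≤ i → 1 - a i ≤ 1 / (2 * i * (i + 1)) := by
    intro i hi
    have hipos : (0 : ℝ) < i := by exact_mod_cast hi
    have hi1 : (1 : ℝ) ≤ i := by exact_mod_cast hi
    set u : ℝ := t / ((i : ℝ) + 1) with hu
    have hup : 0 ≤ u := hu0 i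
    have huv : u ≤ 1 / ((i : ℝ) + 1) := by
      rw [hu]
      gcongr
    have hvhalf : (1 : ℝ) / ((i : ℝ) + 1) ≤ 1 / 2 :=
      one_div_le_one_div_of_le two_pos (by linarith)
    have hult : u < 1 := lt_of_le_of_lt (huv.trans hvhalf) (by norm_num)
    have h1 := one_sub_one_sub_mul_exp_le u hup hult
    have h2 : u ^ 2 / (2 * (1 - u)) ≤ (1 / ((i : ℝ) + 1)) ^ 2 / (2 * (1 - 1 / ((i : ℝ) + 1))) := by
      apply div_le_div₀ (by positivity) (by nlinarith) (by nlinarith) (by nlinarith)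
    have h3 : (1 / ((i : ℝ) + 1)) ^ 2 / (2 * (1 - 1 / ((i : ℝ) + 1))) = 1 / (2 * i * (i + 1)) := by
      field_simp
      ring_nf
      exact mul_inv_cancel₀ hipos.ne'
    rw [ha_eq i]
    calc 1 - (1 - u) * Real.exp u ≤ u ^ 2 / (2 * (1 - u)) := h1
      _ ≤ _ := h2
      _ = _ := h3
  -- partial products over finsets
  set P : Finset ℕ → ℝ := fun s => ∏ i ∈ s, a i with hP_def
  have hPnonneg : ∀ s, 0 ≤ P s := fun s => Finset.prod_nonneg fun i _ => ha0 i
  have hPle_one : ∀ s, P s ≤ 1 := fun s => Finset.prod_le_one (fun i _ => ha0 i) (fun i _ => ha1 i)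
  have hanti : Antitone P := by
    intro s u hsu
    have hsplit : (∏ i ∈ u \ s, a i) * ∏ i ∈ s, a i = ∏ i ∈ u, a i :=
      Finset.prod_sdiff hsu
    have h1 : ∏ i ∈ u \ s, a i ≤ 1 := Finset.prod_le_one (fun i _ => ha0 i) (fun i _ => ha1 i)
    have h2 : 0 ≤ ∏ i ∈ s, a i := Finset.prod_nonneg fun i _ => ha0 i
    show P u ≤ P s
    rw [hP_def]
    simp only [← hsplit]
    nlinarith
  have hbdd : BddBelow (Set.range P) := ⟨0, by rintro y ⟨s, rfl⟩; exact hPnonneg s⟩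
  have hHas : HasProd a (⨅ s : Finset ℕ, P s) := tendsto_atTop_ciInf hanti hbdd
  have hPhi : PhiC x = ⨅ s : Finset ℕ, P s := hHas.tprod_eq
  -- identify phiCpartial with P (range k)
  have hphi : phiCpartial k x = P (Finset.range k) := by
    rw [phiCpartial, hP_def]
    rw [← Finset.Ico_add_one_right_eq_Icc, Finset.prod_Ico_eq_prod_range]
    refine Finset.prod_congr (by norm_num) fun i _ => ?_
    rw [ha_def]
    push_cast
    ring_nf
  have hkR : (0 : ℝ) < k := by exact_mod_cast hk
  -- upper bound on PhiC : PhiC ≤ phi_k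
  have hub : PhiC x ≤ phiCpartial k x := by
    rw [hPhi, hphi]
    exact ciInf_le hbdd (Finset.range k)
  -- lower bound: for every s, P s ≥ phi_k - 1/(2k)
  have hlb : phiCpartial k x - 1 / (2 * k) ≤ PhiC x := by
    rw [hPhi, hphi]
    refine le_ciInf fun s => ?_
    have h1 : P (Finset.range k ∪ s) ≤ P s := hanti Finset.subset_union_right
    set T : Finset ℕ := s \ Finset.range k with hT_def
    have hsplit : P (Finset.range k ∪ s) = P (Finset.range k) * ∏ i ∈ T, a i := by
      rw [hP_def]
      rw [← Finset.prod_union (Finset.disjoint_sdiff)]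
      congr 1
      rw [Finset.union_sdiff_self_eq_union]
    have hTk : ∀ i ∈ T, k ≤ i := by
      intro i hi
      rw [hT_def] at hi
      have := (Finset.mem_sdiff.1 hi).2
      simpa [Finset.mem_range, not_lt] using this
    have hsum : ∑ i ∈ T, (1 - a i) ≤ 1 / (2 * k) := by
      calc ∑ i ∈ T, (1 - a i) ≤ ∑ i ∈ T, (1 : ℝ) / (2 * i * (i + 1)) := by
            refine Finset.sum_le_sum fun i hi => haB i (le_trans hk (hTk i hi))
        _ ≤ 1 / (2 * k) := sum_tail_le k hk T hTk
    have hprodT : 1 - 1 / (2 * (k : ℝ)) ≤ ∏ i ∈ T, a i := by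
      calc (1 : ℝ) - 1 / (2 * k) ≤ 1 - ∑ i ∈ T, (1 - a i) := by linarith
        _ ≤ ∏ i ∈ T, a i := one_sub_sum_le_prod ha0 ha1 T
    have hPk0 : 0 ≤ P (Finset.range k) := hPnonneg _
    have hPk1 : P (Finset.range k) ≤ 1 := hPle_one _
    have hk1 : (1:ℝ) ≤ (k:ℝ) := by exact_mod_cast hk
    have hfrac : (0:ℝ) ≤ 1 - 1 / (2 * k) := by
      have : 1 / (2 * (k:ℝ)) ≤ 1 / 2 := one_div_le_one_div_of_le two_pos (by linarith)
      linarith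
    have hc0 : (0:ℝ) ≤ 1 / (2 * (k:ℝ)) := by positivity
    calc P (Finset.range k) - 1 / (2 * k)
        ≤ P (Finset.range k) * (1 - 1 / (2 * k)) := by
          nlinarith [mul_nonneg hc0 (sub_nonneg.2 hPk1)]
      _ ≤ P (Finset.range k) * ∏ i ∈ T, a i := by
          exact mul_le_mul_of_nonneg_left hprodT hPk0
      _ = P (Finset.range k ∪ s) := hsplit.symm
      _ ≤ P s := h1
  -- the integral constant is at least 1/2
  have hC : (1 : ℝ) / 2 ≤ ∫ u in (0 : ℝ)..1, u / (1 - u / 2) := by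
    have hid : (∫ u in (0 : ℝ)..1, u) = 1 / 2 := by
      norm_num [integral_id]
    rw [← hid]
    have hcont : ContinuousOn (fun u : ℝ => u / (1 - u / 2)) (Set.Icc 0 1) := by
      apply ContinuousOn.div continuousOn_id
      · fun_prop
      · intro u hu
        obtain ⟨h0, h1⟩ := hu
        intro h
        nlinarith
    apply intervalIntegral.integral_mono_on (by norm_num)
    · exact (continuous_id'.intervalIntegrable 0 1 : IntervalIntegrable (fun u : ℝ => u) MeasureTheory.volume 0 1)
    · exact hcont.intervalIntegrable_of_Icc (by norm_num)
    · intro u hu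
      obtain ⟨h0, h1⟩ := hu
      have hpos : (0 : ℝ) < 1 - u / 2 := by linarith
      rw [le_div_iff₀ hpos]
      nlinarith
  constructor
  · linarith
  · have : 1 / (2 * (k : ℝ)) ≤ (∫ u in (0 : ℝ)..1, u / (1 - u / 2)) / k := by
      have h1 : (1 : ℝ) / (2 * k) = (1 / 2) / k := by
        field_simp
      rw [h1]
      gcongr
    linarith
end

section
/- For k ≥ 1 and x ∈ [0,1], the tail product ψ_k(x) := ∏_{ℓ ≥ k+1} (1 − (1−x)/ℓ) e^{(1−x)/ℓ} satisfies −log ψ_k(x) = Σ_{ℓ ≥ k+1} (1/ℓ²) ∫_0^{1−x} u/(1 − u/ℓ) du ≤ C₀/k, where C₀ := ∫_0^1 u/(1 − u/2) du; consequently 1 − ψ_k(x) ≤ C₀/k for all x ∈ [0,1] and all k ≥ 1. -/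
open MeasureTheory intervalIntegral Real

private lemma psi_contOn (m : ℝ) (hm : 2 ≤ m) :
    ContinuousOn (fun u : ℝ => u / (1 - u / m)) (Set.Icc 0 1) := by
  apply ContinuousOn.div continuousOn_id
    (continuousOn_const.sub (continuousOn_id.div_const m))
  intro u hu
  have h : u / m ≤ 1 / 2 := div_le_div₀ (by norm_num) hu.2 (by norm_num) hm
  intro h0
  have : (1:ℝ) - u / m = 0 := h0
  linarith

private lemma psi_intble (m t : ℝ) (hm : 2 ≤ m) (ht0 : 0 ≤ t) (ht1 : t ≤ 1) :
    IntervalIntegrable (fun u : ℝ => u / (1 - u / m)) volume 0 t := by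
  apply ContinuousOn.intervalIntegrable
  apply (psi_contOn m hm).mono
  rw [Set.uIcc_of_le ht0]
  exact Set.Icc_subset_Icc le_rfl ht1

private lemma psi_intformula (m t : ℝ) (hm : 2 ≤ m) (ht0 : 0 ≤ t) (ht1 : t ≤ 1) :
    ∫ u in (0:ℝ)..t, u / (1 - u / m) = -(m * t) - m ^ 2 * Real.log (1 - t / m) := by
  have hm0 : (0:ℝ) < m := by linarith
  have key : ∀ u ∈ Set.uIcc (0:ℝ) t,
      HasDerivAt (fun u => -(m * u) - m ^ 2 * Real.log (1 - u / m))
        (u / (1 - u / m)) u := by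
    intro u hu
    rw [Set.uIcc_of_le ht0] at hu
    have h1 : 0 < 1 - u / m := by
      have : u / m ≤ 1 / 2 := div_le_div₀ (by norm_num) (hu.2.trans ht1) (by norm_num) hm
      linarith
    have hd1 : HasDerivAt (fun u : ℝ => 1 - u / m) (-(1 / m)) u := by
      simpa using ((hasDerivAt_id u).div_const m).const_sub 1
    have hd2 : HasDerivAt (fun u : ℝ => Real.log (1 - u / m))
        ((1 - u / m)⁻¹ * (-(1 / m))) u :=
      HasDerivAt.comp (h₂ := Real.log) u (Real.hasDerivAt_log h1.ne') hd1
    have hA : HasDerivAt (fun u : ℝ => m * u) m u := by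
      simpa using (hasDerivAt_id u).const_mul m
    have := hA.neg.sub (hd2.const_mul (m ^ 2))
    refine this.congr_deriv ?_
    have hm0' : m ≠ 0 := hm0.ne'
    have hu1 : u ≤ 1 := hu.2.trans ht1
    have h2 : -u + m ≠ 0 := by intro h; linarith
    have h3 : -(u * m) + m ^ 2 ≠ 0 := by intro h; nlinarith
    have h4 : m - u ≠ 0 := by intro h; linarith
    field_simp [h1.ne', h2, h3]
    ring
  rw [intervalIntegral.integral_eq_sub_of_hasDerivAt key (psi_intble m t hm ht0 ht1)]
  simp

private lemma psi_identity (m t : ℝ) (hm : 2 ≤ m) (ht0 : 0 ≤ t) (ht1 : t ≤ 1) :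
    (1 / m ^ 2) * ∫ u in (0:ℝ)..t, u / (1 - u / m)
      = -(Real.log (1 - t / m) + t / m) := by
  have hm0 : m ≠ 0 := by intro h; rw [h] at hm; norm_num at hm
  rw [psi_intformula m t hm ht0 ht1]
  field_simp
  ring

private lemma psi_intbound (m t : ℝ) (hm : 2 ≤ m) (ht0 : 0 ≤ t) (ht1 : t ≤ 1) :
    ∫ u in (0:ℝ)..t, u / (1 - u / m)
      ≤ ∫ u in (0:ℝ)..1, u / (1 - u / 2) := by
  have h2 : (2:ℝ) ≤ 2 := le_rfl
  have step1 : ∫ u in (0:ℝ)..t, u / (1 - u / m) ≤ ∫ u in (0:ℝ)..t, u / (1 - u / 2) := by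
    apply intervalIntegral.integral_mono_on ht0 (psi_intble m t hm ht0 ht1)
      (psi_intble 2 t h2 ht0 ht1)
    intro u hu
    have hu0 : 0 ≤ u := hu.1
    have hu1 : u ≤ 1 := hu.2.trans ht1
    have hpos : 0 < 1 - u / 2 := by linarith
    have hle : 1 - u / 2 ≤ 1 - u / m := by
      have : u / m ≤ u / 2 := div_le_div_of_nonneg_left hu0 (by norm_num) hm
      linarith
    exact div_le_div_of_nonneg_left hu0 hpos hle
  have step2 : ∫ u in (0:ℝ)..t, u / (1 - u / 2) ≤ ∫ u in (0:ℝ)..1, u / (1 - u / 2) := by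
    apply intervalIntegral.integral_mono_interval le_rfl ht0 ht1 _
      (psi_intble 2 1 h2 zero_le_one le_rfl)
    filter_upwards [ae_restrict_mem measurableSet_Ioc] with u hu
    have hpos : 0 < 1 - u / 2 := by linarith [hu.2, hu.1]
    exact div_nonneg hu.1.le hpos.le
  linarith

private lemma psi_intnonneg (m t : ℝ) (hm : 2 ≤ m) (ht0 : 0 ≤ t) (ht1 : t ≤ 1) :
    0 ≤ ∫ u in (0:ℝ)..t, u / (1 - u / m) := by
  apply intervalIntegral.integral_nonneg ht0
  intro u hu
  have hpos : 0 < 1 - u / m := by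
    have : u / m ≤ 1 / 2 := div_le_div₀ (by norm_num) (hu.2.trans ht1) (by norm_num) hm
    linarith
  exact div_nonneg hu.1 hpos.le

/-- The tail product `ψ_k(x) = ∏_{ℓ ≥ k+1} (1 - (1-x)/ℓ) e^{(1-x)/ℓ}`. -/
noncomputable def psiCtail (k : ℕ) (x : ℝ) : ℝ :=
  ∏' ℓ : ℕ, (1 - (1 - x) / ((k : ℝ) + 1 + ℓ)) * Real.exp ((1 - x) / ((k : ℝ) + 1 + ℓ))

/-- For `k ≥ 1` and `x ∈ [0,1]`, with `C₀ := ∫_0^1 u/(1 - u/2) du`: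
`-log ψ_k(x) = ∑_{ℓ ≥ k+1} (1/ℓ²) ∫_0^{1-x} u/(1 - u/ℓ) du ≤ C₀/k`, and consequently
`1 - ψ_k(x) ≤ C₀/k`. -/
theorem neg_log_psiCtail (k : ℕ) (hk : 1 ≤ k) (x : ℝ) (hx : x ∈ Set.Icc (0 : ℝ) 1) :
    (-Real.log (psiCtail k x)
        = ∑' ℓ : ℕ, (1 / ((k : ℝ) + 1 + ℓ) ^ 2) *
            ∫ u in (0 : ℝ)..(1 - x), u / (1 - u / ((k : ℝ) + 1 + ℓ))) ∧
    (-Real.log (psiCtail k x) ≤ (∫ u in (0 : ℝ)..1, u / (1 - u / 2)) / k) ∧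
    (1 - psiCtail k x ≤ (∫ u in (0 : ℝ)..1, u / (1 - u / 2)) / k) := by
  obtain ⟨hx0, hx1⟩ := hx
  have hk1 : (1:ℝ) ≤ (k:ℝ) := by exact_mod_cast hk
  set t : ℝ := 1 - x with htdef
  have ht0 : 0 ≤ t := by rw [htdef]; linarith
  have ht1 : t ≤ 1 := by rw [htdef]; linarith
  set C₀ : ℝ := ∫ u in (0:ℝ)..1, u / (1 - u / 2) with hC₀def
  have hm : ∀ ℓ : ℕ, 2 ≤ (k:ℝ) + 1 + ℓ := by
    intro ℓ
    have h0 : (0:ℝ) ≤ (ℓ:ℝ) := Nat.cast_nonneg ℓ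
    linarith
  have hC0 : 0 ≤ C₀ := psi_intnonneg 2 1 le_rfl zero_le_one le_rfl
  set f : ℕ → ℝ := fun ℓ => Real.log (1 - t / ((k:ℝ) + 1 + ℓ)) + t / ((k:ℝ) + 1 + ℓ)
    with hfdef
  set g : ℕ → ℝ := fun ℓ => (1 / ((k:ℝ) + 1 + ℓ) ^ 2) *
      ∫ u in (0:ℝ)..t, u / (1 - u / ((k:ℝ) + 1 + ℓ)) with hgdef
  have hgid : ∀ ℓ : ℕ, g ℓ = -(f ℓ) := fun ℓ => psi_identity _ t (hm ℓ) ht0 ht1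
  have hgnonneg : ∀ ℓ : ℕ, 0 ≤ g ℓ := by
    intro ℓ
    have h1 : (0:ℝ) < (k:ℝ) + 1 + ℓ := by linarith [hm ℓ]
    exact mul_nonneg (by positivity) (psi_intnonneg _ t (hm ℓ) ht0 ht1)
  set b : ℕ → ℝ := fun ℓ => 1 / ((k:ℝ) + ℓ) - 1 / ((k:ℝ) + 1 + ℓ) with hbdef
  have hbnonneg : ∀ ℓ : ℕ, 0 ≤ b ℓ := by
    intro ℓ
    have h0 : (0:ℝ) ≤ (ℓ:ℝ) := Nat.cast_nonneg ℓ
    have h1 : (0:ℝ) < (k:ℝ) + ℓ := by linarith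
    have h2 : 1 / ((k:ℝ) + 1 + ℓ) ≤ 1 / ((k:ℝ) + ℓ) :=
      one_div_le_one_div_of_le h1 (by linarith)
    simp only [hbdef]
    linarith
  have hbsum : HasSum b (1 / (k:ℝ)) := by
    rw [hasSum_iff_tendsto_nat_of_nonneg hbnonneg]
    have hps : ∀ n : ℕ, ∑ ℓ ∈ Finset.range n, b ℓ = 1 / (k:ℝ) - 1 / ((k:ℝ) + n) := by
      intro n
      have h := Finset.sum_range_sub' (fun ℓ : ℕ => 1 / ((k:ℝ) + ℓ)) n
      have h2 : ∑ ℓ ∈ Finset.range n, b ℓ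
          = ∑ ℓ ∈ Finset.range n, (1 / ((k:ℝ) + ℓ) - 1 / ((k:ℝ) + (ℓ + 1 : ℕ))) := by
        apply Finset.sum_congr rfl
        intro i _
        simp only [hbdef]
        push_cast
        ring
      rw [h2, h]
      norm_num
    have hlim : Filter.Tendsto (fun n : ℕ => 1 / ((k:ℝ) + n)) Filter.atTop (nhds 0) := by
      have h1 : Filter.Tendsto (fun n : ℕ => (k:ℝ) + n) Filter.atTop Filter.atTop :=
        Filter.tendsto_atTop_add_const_left _ _ tendsto_natCast_atTop_atTop
      simpa [one_div, Pi.inv_def] using h1.inv_tendsto_atTop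
    have := (tendsto_const_nhds (x := 1 / (k:ℝ)) (f := Filter.atTop (α := ℕ))).sub hlim
    simp only [sub_zero] at this
    exact this.congr fun n => (hps n).symm
  have hgle : ∀ ℓ : ℕ, g ℓ ≤ C₀ * b ℓ := by
    intro ℓ
    have h0 : (0:ℝ) ≤ (ℓ:ℝ) := Nat.cast_nonneg ℓ
    have hA : (0:ℝ) < (k:ℝ) + ℓ := by linarith
    have hB : (0:ℝ) < (k:ℝ) + 1 + ℓ := by linarith
    have step1 : g ℓ ≤ (1 / ((k:ℝ) + 1 + ℓ) ^ 2) * C₀ :=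
      mul_le_mul_of_nonneg_left (psi_intbound _ t (hm ℓ) ht0 ht1) (by positivity)
    have hbform : b ℓ = 1 / (((k:ℝ) + ℓ) * ((k:ℝ) + 1 + ℓ)) := by
      simp only [hbdef]
      field_simp
      ring
    have step2 : 1 / ((k:ℝ) + 1 + ℓ) ^ 2 ≤ b ℓ := by
      rw [hbform]
      apply one_div_le_one_div_of_le (by positivity)
      nlinarith
    calc g ℓ ≤ (1 / ((k:ℝ) + 1 + ℓ) ^ 2) * C₀ := step1
      _ = C₀ * (1 / ((k:ℝ) + 1 + ℓ) ^ 2) := by ring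
      _ ≤ C₀ * b ℓ := mul_le_mul_of_nonneg_left step2 hC0
  have hCbsum : Summable (fun ℓ => C₀ * b ℓ) := hbsum.summable.mul_left C₀
  have hgsum : Summable g := Summable.of_nonneg_of_le hgnonneg hgle hCbsum
  have hfsummable : Summable f := by
    have : f = fun ℓ => -(g ℓ) := funext fun ℓ => by rw [hgid ℓ, neg_neg]
    rw [this]
    exact hgsum.neg
  have hprod := hfsummable.hasSum.rexp
  have hfactor : (fun ℓ : ℕ => (1 - t / ((k:ℝ) + 1 + ℓ)) * Real.exp (t / ((k:ℝ) + 1 + ℓ)))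
      = Real.exp ∘ f := by
    funext ℓ
    have hpos : 0 < 1 - t / ((k:ℝ) + 1 + ℓ) := by
      have : t / ((k:ℝ) + 1 + ℓ) ≤ 1 / 2 :=
        div_le_div₀ (by norm_num) ht1 (by norm_num) (hm ℓ)
      linarith
    simp only [Function.comp, hfdef, Real.exp_add, Real.exp_log hpos]
  have hpsi : psiCtail k x = Real.exp (∑' ℓ, f ℓ) := by
    have h2 : HasProd
        (fun ℓ : ℕ => (1 - t / ((k:ℝ) + 1 + ℓ)) * Real.exp (t / ((k:ℝ) + 1 + ℓ)))
        (Real.exp (∑' ℓ, f ℓ)) := by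
      rw [hfactor]
      exact hprod
    rw [psiCtail]
    exact h2.tprod_eq
  have hψpos : 0 < psiCtail k x := by rw [hpsi]; exact Real.exp_pos _
  have hlog : Real.log (psiCtail k x) = ∑' ℓ, f ℓ := by rw [hpsi, Real.log_exp]
  have part1 : -Real.log (psiCtail k x) = ∑' ℓ, g ℓ := by
    rw [hlog, ← tsum_neg]
    exact tsum_congr fun ℓ => (hgid ℓ).symm
  have part2 : -Real.log (psiCtail k x) ≤ C₀ / (k:ℝ) := by
    rw [part1]
    calc ∑' ℓ, g ℓ ≤ ∑' ℓ, C₀ * b ℓ := Summable.tsum_le_tsum hgle hgsum hCbsum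
      _ = C₀ * (1 / (k:ℝ)) := (hbsum.mul_left C₀).tsum_eq
      _ = C₀ / (k:ℝ) := by rw [mul_one_div]
  refine ⟨part1, part2, ?_⟩
  have hlb := Real.log_le_sub_one_of_pos hψpos
  linarith
end

section
/- Let (Z_ℓ)_{ℓ ≥ 1} be i.i.d. random variables with P(Z ≥ x) = (1 + x) e^{−x} for all x ≥ 0. Then for every k ≥ 1, E[sup_{ℓ ≥ k+1} 1/(ℓ Z_ℓ)] ≤ 2/√(2k) = √(2/k); in particular E[sup_{ℓ ≥ k+1} 1/(ℓ Z_ℓ)] = O(k^{−1/2}) as k → ∞. -/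
open MeasureTheory ProbabilityTheory Set Filter
open scoped ENNReal


lemma aux_hasDerivAt (x : ℝ) :
    HasDerivAt (fun u : ℝ => u^2/2 + (1+u)*Real.exp (-u)) (x - x * Real.exp (-x)) x := by
  have h1 : HasDerivAt (fun u : ℝ => u^2/2) x x := by
    simpa using ((hasDerivAt_pow 2 x).div_const 2)
  have h2 : HasDerivAt (fun u : ℝ => Real.exp (-u)) (-Real.exp (-x)) x := by
    simpa [Function.comp_def] using ((Real.hasDerivAt_exp (-x)).comp x ((hasDerivAt_id x).neg))
  have h3 : HasDerivAt (fun u : ℝ => (1+u)*Real.exp (-u))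
      ((0 + 1) * Real.exp (-x) + (1+x) * (-Real.exp (-x))) x :=
    ((hasDerivAt_const x 1).add (hasDerivAt_id' x)).mul h2
  have := h1.add h3
  refine this.congr_deriv ?_
  ring

lemma aux_one_le (u : ℝ) (hu : 0 ≤ u) : 1 ≤ u^2/2 + (1+u)*Real.exp (-u) := by
  set φ : ℝ → ℝ := fun u => u^2/2 + (1+u)*Real.exp (-u) with hφ
  have hmono : MonotoneOn φ (Ici 0) := by
    apply monotoneOn_of_deriv_nonneg (convex_Ici 0)
      (fun x _ => (aux_hasDerivAt x).continuousAt.continuousWithinAt)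
      (fun x hx => (aux_hasDerivAt x).differentiableAt.differentiableWithinAt)
    intro x hx
    rw [interior_Ici] at hx
    rw [(aux_hasDerivAt x).deriv]
    have hx' : (0:ℝ) < x := hx
    have : Real.exp (-x) ≤ 1 := by
      rw [Real.exp_le_one_iff]; linarith
    nlinarith
  have := hmono (self_mem_Ici) hu hu
  simpa [hφ] using this

lemma aux_cdf {Ω : Type*} [MeasureSpace Ω] [IsProbabilityMeasure (ℙ : Measure Ω)]
    (W : Ω → ℝ) (hW : Measurable W)
    (hd : ∀ x : ℝ, 0 ≤ x → ℙ {ω | x ≤ W ω} = ENNReal.ofReal ((1 + x) * Real.exp (-x)))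
    (u : ℝ) (hu : 0 ≤ u) :
    ℙ {ω | W ω < u} ≤ ENNReal.ofReal (u^2/2) := by
  have hset : {ω | W ω < u} = {ω | u ≤ W ω}ᶜ := by
    ext ω; simp [not_le]
  have hms : MeasurableSet {ω | u ≤ W ω} := hW measurableSet_Ici
  rw [hset, prob_compl_eq_one_sub hms, hd u hu, tsub_le_iff_right,
    ← ENNReal.ofReal_add (by positivity) (by positivity)]
  calc (1 : ℝ≥0∞) = ENNReal.ofReal 1 := by simp
    _ ≤ _ := ENNReal.ofReal_le_ofReal (aux_one_le u hu)

lemma aux_var {Ω : Type*} [MeasureSpace Ω] [IsProbabilityMeasure (ℙ : Measure Ω)]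
    (W : Ω → ℝ) (hW : Measurable W)
    (hd : ∀ x : ℝ, 0 ≤ x → ℙ {ω | x ≤ W ω} = ENNReal.ofReal ((1 + x) * Real.exp (-x)))
    (c a : ℝ) (hc : 0 < c) (ha : 0 < a) :
    ∫⁻ ω, ENNReal.ofReal (1/(c * W ω) - a) ∂ℙ ≤ ENNReal.ofReal (1/(2*c^2*a)) := by
  set f : Ω → ℝ := fun ω => max (1/(c * W ω) - a) 0 with hf
  have hofReal : ∀ x : ℝ, ENNReal.ofReal (max x 0) = ENNReal.ofReal x := fun x => by
    rcases le_total x 0 with h|h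
    · simp [ENNReal.ofReal_of_nonpos h, max_eq_right h]
    · simp [max_eq_left h]
  have hmf : Measurable f := by
    have : Measurable fun ω => (c * W ω)⁻¹ - a := ((hW.const_mul c).inv).sub measurable_const
    simpa [hf, one_div] using this.max measurable_const
  have hstep1 : ∫⁻ ω, ENNReal.ofReal (1/(c * W ω) - a) ∂ℙ
      = ∫⁻ t in Ioi (0:ℝ), ℙ {ω | t < f ω} :=
    (lintegral_congr fun ω => (hofReal _).symm).trans
      (lintegral_eq_lintegral_meas_lt ℙ (ae_of_all _ fun ω => le_max_right _ _)
        hmf.aemeasurable)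
  -- pointwise bound on the tail measure
  have hmeasbd : ∀ t : ℝ, 0 < t →
      ℙ {ω | t < f ω} ≤ ENNReal.ofReal ((1/(c*(a+t)))^2/2) := by
    intro t ht
    have hsub : {ω | t < f ω} ⊆ {ω | W ω < 1/(c*(a+t))} := by
      intro ω hω
      simp only [hf, mem_setOf_eq, lt_max_iff] at hω
      rcases hω with h1 | h2
      · have h1' : a + t < 1/(c * W ω) := by linarith
        have hpos : 0 < c * W ω := by
          by_contra h
          push_neg at h
          have : 1/(c * W ω) ≤ 0 := div_nonpos_of_nonneg_of_nonpos zero_le_one h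
          linarith
        have hv : 0 < W ω := by
          rcases mul_pos_iff.mp hpos with ⟨h1, h2⟩ | ⟨h1, h2⟩
          · exact h2
          · linarith
        have hat : 0 < a + t := by linarith
        have h2' : (a+t) * (c * W ω) < 1 := (lt_div_iff₀ (mul_pos hc hv)).mp h1'
        show W ω < 1/(c*(a+t))
        rw [lt_div_iff₀ (by positivity)]
        nlinarith
      · linarith
    calc ℙ {ω | t < f ω} ≤ ℙ {ω | W ω < 1/(c*(a+t))} := measure_mono hsub
      _ ≤ _ := aux_cdf W hW hd _ (by positivity)
  -- the improper integral
  set g' : ℝ → ℝ := fun t => (1/(c*(a+t)))^2/2 with hg'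
  set G : ℝ → ℝ := fun t => -((2*c^2*(a+t))⁻¹) with hG
  have hderiv : ∀ t : ℝ, 0 < a + t → HasDerivAt G (g' t) t := by
    intro t ht
    have h1 : HasDerivAt (fun t : ℝ => 2*c^2*(a+t)) (2*c^2) t := by
      simpa using (((hasDerivAt_id t).const_add a).const_mul (2*c^2))
    have h2 := (h1.inv (by positivity)).neg
    refine h2.congr_deriv ?_
    simp only [hg']
    field_simp
  have htend : Tendsto G atTop (nhds 0) := by
    have h1 : Tendsto (fun t : ℝ => 2*c^2*(a+t)) atTop atTop :=
      (tendsto_atTop_add_const_left _ a tendsto_id).const_mul_atTop (by positivity)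
    have h2 := (h1.inv_tendsto_atTop).neg
    rw [neg_zero] at h2
    exact h2
  have hcont : ContinuousWithinAt G (Ici 0) 0 :=
    (hderiv 0 (by simpa using ha)).continuousAt.continuousWithinAt
  have hderiv' : ∀ t ∈ Ioi (0:ℝ), HasDerivAt G (g' t) t := fun t ht =>
    hderiv t (by simp at ht; linarith)
  have hpos : ∀ t ∈ Ioi (0:ℝ), 0 ≤ g' t := fun t _ => by positivity
  have hint : IntegrableOn g' (Ioi 0) :=
    integrableOn_Ioi_deriv_of_nonneg hcont hderiv' hpos htend
  have hval : ∫ t in Ioi (0:ℝ), g' t = 1/(2*c^2*a) := by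
    rw [integral_Ioi_of_hasDerivAt_of_tendsto hcont hderiv' hint htend]
    simp [hG]
  calc ∫⁻ ω, ENNReal.ofReal (1/(c * W ω) - a) ∂ℙ
      = ∫⁻ t in Ioi (0:ℝ), ℙ {ω | t < f ω} := hstep1
    _ ≤ ∫⁻ t in Ioi (0:ℝ), ENNReal.ofReal (g' t) := by
        apply lintegral_mono_ae
        rw [ae_restrict_iff' measurableSet_Ioi]
        exact ae_of_all _ fun t ht => hmeasbd t ht
    _ = ENNReal.ofReal (∫ t in Ioi (0:ℝ), g' t) :=
        (ofReal_integral_eq_lintegral_ofReal hint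
          ((ae_restrict_iff' measurableSet_Ioi).mpr (ae_of_all _ fun t ht => hpos t ht))).symm
    _ = ENNReal.ofReal (1/(2*c^2*a)) := by rw [hval]

lemma aux_hasSum (k : ℕ) (hk : 1 ≤ k) :
    HasSum (fun ℓ : ℕ => 1/((k:ℝ)+ℓ) - 1/((k:ℝ)+1+ℓ)) (1/(k:ℝ)) := by
  have hk1 : (1:ℝ) ≤ k := by exact_mod_cast hk
  set f : ℕ → ℝ := fun i => 1/((k:ℝ)+i) with hf
  have hcongr : ∀ i : ℕ, 1/((k:ℝ)+i) - 1/((k:ℝ)+1+i) = f i - f (i+1) := by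
    intro i; simp only [hf]; push_cast; ring_nf
  have hnn : ∀ i : ℕ, 0 ≤ 1/((k:ℝ)+i) - 1/((k:ℝ)+1+i) := by
    intro i
    have h1 : (0:ℝ) < (k:ℝ)+i := by positivity
    have h2 : (0:ℝ) < (k:ℝ)+1+i := by positivity
    rw [sub_nonneg]
    apply one_div_le_one_div_of_le h1
    linarith
  rw [hasSum_iff_tendsto_nat_of_nonneg hnn]
  have hsum : ∀ n : ℕ, ∑ i ∈ Finset.range n, (1/((k:ℝ)+i) - 1/((k:ℝ)+1+i))
      = f 0 - f n := by
    intro n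
    rw [Finset.sum_congr rfl (fun i _ => hcongr i)]
    exact Finset.sum_range_sub' f n
  simp only [hsum]
  have hf0 : f 0 = 1/(k:ℝ) := by simp [hf]
  rw [hf0]
  have htail : Tendsto (fun n : ℕ => f n) atTop (nhds 0) := by
    have h1 : Tendsto (fun n : ℕ => (k:ℝ) + n) atTop atTop :=
      tendsto_atTop_add_const_left _ _ tendsto_natCast_atTop_atTop
    simpa [hf, one_div, Pi.inv_def] using h1.inv_tendsto_atTop
  simpa using (tendsto_const_nhds (x := 1/(k:ℝ))).sub htail

/-- Let `(Z_ℓ)_{ℓ ≥ 1}` be i.i.d. with survival function `P(Z ≥ x) = (1+x)e^{-x}` for `x ≥ 0`.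
Then for every `k ≥ 1`, `E[sup_{ℓ ≥ k+1} 1/(ℓ Z_ℓ)] ≤ 2/√(2k) = √(2/k)`; in particular this
expectation is `O(k^{-1/2})` as `k → ∞`. -/
theorem expected_sup_inv_scaled_le
    {Ω : Type*} [MeasureSpace Ω] [IsProbabilityMeasure (ℙ : Measure Ω)]
    (Z : ℕ → Ω → ℝ) (hmeas : ∀ ℓ, Measurable (Z ℓ))
    (hindep : iIndepFun Z ℙ)
    (hdist : ∀ ℓ : ℕ, ∀ x : ℝ, 0 ≤ x →
      ℙ {ω | x ≤ Z ℓ ω} = ENNReal.ofReal ((1 + x) * Real.exp (-x))) :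
    ∀ k : ℕ, 1 ≤ k →
      ∫⁻ ω, (⨆ ℓ : ℕ, ENNReal.ofReal (1 / (((k : ℝ) + 1 + ℓ) * Z (k + 1 + ℓ) ω))) ∂ℙ
        ≤ ENNReal.ofReal (2 / Real.sqrt (2 * k)) := by
  intro k hk
  have hk1 : (1:ℝ) ≤ k := by exact_mod_cast hk
  set a : ℝ := 1 / Real.sqrt (2*k) with ha_def
  have hs : 0 < Real.sqrt (2*k) := Real.sqrt_pos.mpr (by linarith)
  have hs2 : Real.sqrt (2*k)^2 = 2*k := Real.sq_sqrt (by linarith)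
  have ha : 0 < a := by positivity
  set c : ℕ → ℝ := fun ℓ => (k:ℝ) + 1 + ℓ with hc_def
  have hc : ∀ ℓ, 0 < c ℓ := fun ℓ => by positivity
  set g : ℕ → Ω → ℝ≥0∞ := fun ℓ ω => ENNReal.ofReal (1/(c ℓ * Z (k+1+ℓ) ω) - a) with hg_def
  -- pointwise bound
  have hpoint : ∀ ω, (⨆ ℓ : ℕ, ENNReal.ofReal (1 / (((k : ℝ) + 1 + ℓ) * Z (k + 1 + ℓ) ω)))
      ≤ ENNReal.ofReal a + ∑' ℓ, g ℓ ω := by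
    intro ω
    apply iSup_le
    intro ℓ
    calc ENNReal.ofReal (1 / (((k : ℝ) + 1 + ℓ) * Z (k + 1 + ℓ) ω))
        = ENNReal.ofReal (a + (1/(c ℓ * Z (k+1+ℓ) ω) - a)) := by
          rw [hc_def]; ring_nf
      _ ≤ ENNReal.ofReal a + g ℓ ω := ENNReal.ofReal_add_le
      _ ≤ ENNReal.ofReal a + ∑' ℓ', g ℓ' ω := add_le_add_right (ENNReal.le_tsum ℓ) _
  have hgm : ∀ ℓ, Measurable (g ℓ) := by
    intro ℓ
    have h1 : Measurable fun ω => (c ℓ * Z (k+1+ℓ) ω)⁻¹ - a :=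
      (((hmeas (k+1+ℓ)).const_mul (c ℓ)).inv).sub measurable_const
    simpa [hg_def, one_div, Function.comp_def] using ENNReal.measurable_ofReal.comp h1
  have hb : ∀ ℓ : ℕ, 1/(2*(c ℓ)^2*a) ≤ (1/(2*a)) * (1/((k:ℝ)+ℓ) - 1/((k:ℝ)+1+ℓ)) := by
    intro ℓ
    have hx : (0:ℝ) < (k:ℝ)+ℓ := by positivity
    have hx1 : (0:ℝ) < (k:ℝ)+1+ℓ := by positivity
    have hdiff : 1/((k:ℝ)+ℓ) - 1/((k:ℝ)+1+ℓ) = 1/(((k:ℝ)+ℓ)*((k:ℝ)+1+ℓ)) := by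
      rw [div_sub_div _ _ (ne_of_gt hx) (ne_of_gt hx1)]
      congr 1
      ring
    have hcomb : (1:ℝ)/(2*a) * (1/(((k:ℝ)+ℓ)*((k:ℝ)+1+ℓ)))
        = 1/(2*a*(((k:ℝ)+ℓ)*((k:ℝ)+1+ℓ))) := by
      rw [div_mul_div_comm, one_mul]
    rw [hdiff, hcomb]
    show (1:ℝ)/(2*((k:ℝ)+1+ℓ)^2*a) ≤ _
    apply one_div_le_one_div_of_le (by positivity)
    nlinarith
  have hsum : HasSum (fun ℓ : ℕ => (1/(2*a)) * (1/((k:ℝ)+ℓ) - 1/((k:ℝ)+1+ℓ)))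
      ((1/(2*a)) * (1/(k:ℝ))) := (aux_hasSum k hk).mul_left _
  have hbnn : ∀ ℓ : ℕ, 0 ≤ (1/(2*a)) * (1/((k:ℝ)+ℓ) - 1/((k:ℝ)+1+ℓ)) := by
    intro ℓ
    apply mul_nonneg (by positivity)
    have h1 : (0:ℝ) < (k:ℝ)+ℓ := by positivity
    rw [sub_nonneg]
    apply one_div_le_one_div_of_le h1
    linarith
  calc ∫⁻ ω, (⨆ ℓ : ℕ, ENNReal.ofReal (1 / (((k : ℝ) + 1 + ℓ) * Z (k + 1 + ℓ) ω))) ∂ℙ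
      ≤ ∫⁻ ω, (ENNReal.ofReal a + ∑' ℓ, g ℓ ω) ∂ℙ := lintegral_mono hpoint
    _ = ENNReal.ofReal a + ∑' ℓ, ∫⁻ ω, g ℓ ω ∂ℙ := by
        rw [lintegral_add_left measurable_const, lintegral_const, measure_univ, mul_one,
          lintegral_tsum fun ℓ => (hgm ℓ).aemeasurable]
    _ ≤ ENNReal.ofReal a + ∑' ℓ, ENNReal.ofReal (1/(2*(c ℓ)^2*a)) := by
        apply add_le_add_right
        apply ENNReal.tsum_le_tsum
        intro ℓ
        exact aux_var (Z (k+1+ℓ)) (hmeas _) (hdist _) (c ℓ) a (hc ℓ) ha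
    _ ≤ ENNReal.ofReal a
        + ∑' ℓ : ℕ, ENNReal.ofReal ((1/(2*a)) * (1/((k:ℝ)+ℓ) - 1/((k:ℝ)+1+ℓ))) := by
        apply add_le_add_right
        exact ENNReal.tsum_le_tsum fun ℓ => ENNReal.ofReal_le_ofReal (hb ℓ)
    _ = ENNReal.ofReal a + ENNReal.ofReal ((1/(2*a)) * (1/(k:ℝ))) := by
        rw [← ENNReal.ofReal_tsum_of_nonneg hbnn hsum.summable, hsum.tsum_eq]
    _ = ENNReal.ofReal (2 / Real.sqrt (2 * k)) := by
        rw [← ENNReal.ofReal_add ha.le (by positivity)]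
        congr 1
        have key : ∀ s : ℝ, 0 < s → s^2 = 2*(k:ℝ) →
            1/s + 1/(2*(1/s)) * (1/(k:ℝ)) = 2/s := by
          intro s hs0 hs2'
          have hk0 : (0:ℝ) < k := by linarith
          have h1 : 1/(2*(1/s)) * (1/(k:ℝ)) = s/(2*k) := by
            field_simp
          have h2 : s/(2*(k:ℝ)) = 1/s := by
            rw [← hs2', pow_two, div_eq_div_iff (by positivity) (ne_of_gt hs0)]
            ring
          rw [h1, h2]
          ring
        rw [ha_def]
        exact key _ hs hs2
end
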